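/- arXiv:1507.02013 — 8 statements merged into one kernel-verified Lean document; each statement's English description precedes it below -/
import Mathlib

section
/- Let X be a metric space and Z a separable Banach space. If a multivalued map G : X → 2^Z is weakly upper semicontinuous, then G is measurable with respect to the Borel σ-algebra of X; that is, for every open set O ⊆ Z, the set G⁻¹(O) = {x ∈ X : G(x) ∩ O ≠ ∅} is a Borel subset of X. -/
open Filter Topology

open Metric

/-- A weakly upper semicontinuous multivalued map `G` from a metric space `X`
to a separable Banach space `Z` is Borel measurable: the inverse image
`G⁻¹(O) = {x | G x ∩ O ≠ ∅}` of every open set `O ⊆ Z` is a Borel subset of `X`. -/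
theorem stmt1 {X Z : Type*} [MetricSpace X]
    [NormedAddCommGroup Z] [NormedSpace ℝ Z] [CompleteSpace Z]
    [TopologicalSpace.SeparableSpace Z]
    [MeasurableSpace X] [BorelSpace X]
    (G : X → Set Z)
    (hwusc : ∀ x₀ : X, ∀ x : ℕ → X, Tendsto x atTop (𝓝 x₀) →
      ∀ z : ℕ → Z, (∀ n, z n ∈ G (x n)) →
      ∃ z₀ ∈ G x₀, ∃ φ : ℕ → ℕ, StrictMono φ ∧
        ∀ ℓ : Z →L[ℝ] ℝ, Tendsto (fun k => ℓ (z (φ k))) atTop (𝓝 (ℓ z₀))) :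
    ∀ O : Set Z, IsOpen O → MeasurableSet {x : X | (G x ∩ O).Nonempty} := by
  -- Step 1: preimages of closed balls are closed
  have hball : ∀ (c : Z) (r : ℝ), 0 ≤ r →
      IsClosed {x : X | (G x ∩ closedBall c r).Nonempty} := by
    intro c r hr
    apply IsSeqClosed.isClosed
    intro x x₀ hx hconv
    have hz : ∀ n, ∃ w, w ∈ G (x n) ∧ w ∈ closedBall c r := fun n => hx n
    choose z hz1 hz2 using hz
    obtain ⟨z₀, hz₀, φ, hφ, hweak⟩ := hwusc x₀ x hconv z hz1
    refine ⟨z₀, hz₀, ?_⟩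
    by_cases h0 : z₀ - c = 0
    · have : z₀ = c := by rwa [sub_eq_zero] at h0
      simp [this, hr]
    · obtain ⟨ℓ, hℓ1, hℓ2⟩ := exists_dual_vector ℝ (z₀ - c) (norm_ne_zero_iff.mpr h0)
      have hlim : Tendsto (fun k => ℓ (z (φ k)) - ℓ c) atTop (𝓝 (ℓ z₀ - ℓ c)) :=
        (hweak ℓ).sub tendsto_const_nhds
      have hbd : ∀ k, ℓ (z (φ k)) - ℓ c ≤ r := by
        intro k
        have := ℓ.le_opNorm (z (φ k) - c)
        rw [hℓ1, one_mul] at this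
        calc ℓ (z (φ k)) - ℓ c = ℓ (z (φ k) - c) := by rw [map_sub]
          _ ≤ ‖ℓ (z (φ k) - c)‖ := le_abs_self _
          _ ≤ ‖z (φ k) - c‖ := this
          _ ≤ r := by
            have := hz2 (φ k)
            rwa [mem_closedBall, dist_eq_norm] at this
      have hval : ℓ z₀ - ℓ c = ‖z₀ - c‖ := by
        rw [← map_sub]; simpa using hℓ2
      have : ℓ z₀ - ℓ c ≤ r := le_of_tendsto hlim (Eventually.of_forall hbd)
      rw [hval] at this
      rwa [mem_closedBall, dist_eq_norm]
  intro O hO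
  -- countable dense set
  obtain ⟨s, hsc, hsd⟩ := TopologicalSpace.exists_countable_dense Z
  set T : Set (Z × ℚ) := {p | p.1 ∈ s ∧ 0 ≤ (p.2 : ℝ) ∧ closedBall p.1 (p.2 : ℝ) ⊆ O} with hT
  have hTc : T.Countable := by
    apply Set.Countable.mono _ (hsc.prod (Set.countable_univ))
    intro p hp; exact ⟨hp.1, trivial⟩
  have key : {x : X | (G x ∩ O).Nonempty}
      = ⋃ p ∈ T, {x : X | (G x ∩ closedBall p.1 (p.2 : ℝ)).Nonempty} := by
    ext x
    simp only [Set.mem_setOf_eq, Set.mem_iUnion]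
    constructor
    · rintro ⟨w, hwG, hwO⟩
      obtain ⟨ε, hε, hball⟩ := Metric.isOpen_iff.1 hO w hwO
      obtain ⟨c, hcs, hc⟩ := hsd.exists_dist_lt w (by positivity : (0:ℝ) < ε/3)
      obtain ⟨r, hr1, hr2⟩ := exists_rat_btwn (by linarith : ε/3 < ε/2)
      refine ⟨(c, r), ⟨hcs, by linarith [hr1], ?_⟩, w, hwG, ?_⟩
      · intro y hy
        apply hball
        rw [mem_ball]
        calc dist y w ≤ dist y c + dist c w := dist_triangle _ _ _
          _ ≤ r + ε/3 := add_le_add (mem_closedBall.1 hy) (le_of_lt (by rw [dist_comm]; exact hc))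
          _ < ε := by linarith
      · exact mem_closedBall.2 (le_of_lt (hc.trans hr1))
    · rintro ⟨p, ⟨hp1, hp2, hp3⟩, w, hwG, hwB⟩
      exact ⟨w, hwG, hp3 hwB⟩
  rw [key]
  exact MeasurableSet.biUnion hTc fun p hp => (hball p.1 p.2 hp.2.1).measurableSet
end

section
/- Let (Ω, 𝓕) be a measurable space and X a metric space. For each n ∈ ℕ let E_n : Ω → 2^X be an 𝓕-measurable set-valued map with nonempty closed values. Suppose that for each fixed ω ∈ Ω every sequence (x_n) with x_n ∈ E_n(ω) has a subsequence converging in X, and that the sequence (E_n(ω)) is decreasing: E_{n+1}(ω) ⊆ E_n(ω) for all n and ω. Then the map ω ↦ ⋂_{n∈ℕ} E_n(ω) is 𝓕-measurable with nonempty closed values. -/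
open Filter Topology ENNReal

/-- Let `Eₙ : Ω → 2^X` be `𝓕`-measurable set-valued maps with nonempty
closed values, such that for each fixed `ω` every sequence `xₙ ∈ Eₙ(ω)` has a convergent
subsequence, and such that `(Eₙ(ω))ₙ` is decreasing.  Then `ω ↦ ⋂ₙ Eₙ(ω)` is
`𝓕`-measurable with nonempty closed values. -/
theorem stmt6 {Ω X : Type*} [MeasurableSpace Ω] [MetricSpace X]
    (E : ℕ → Ω → Set X)
    (hmeas : ∀ n, ∀ O : Set X, IsOpen O → MeasurableSet {ω | (E n ω ∩ O).Nonempty})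
    (hne : ∀ n ω, (E n ω).Nonempty)
    (hcl : ∀ n ω, IsClosed (E n ω))
    (hcpt : ∀ ω, ∀ x : ℕ → X, (∀ n, x n ∈ E n ω) →
      ∃ a : X, ∃ φ : ℕ → ℕ, StrictMono φ ∧ Tendsto (fun k => x (φ k)) atTop (𝓝 a))
    (hdec : ∀ n ω, E (n + 1) ω ⊆ E n ω) :
    (∀ O : Set X, IsOpen O → MeasurableSet {ω | ((⋂ n, E n ω) ∩ O).Nonempty}) ∧
    (∀ ω, (⋂ n, E n ω).Nonempty ∧ IsClosed (⋂ n, E n ω)) := by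
  have hanti : ∀ ω ⦃m n : ℕ⦄, m ≤ n → E n ω ⊆ E m ω := fun ω =>
    antitone_nat_of_succ_le (fun k => hdec k ω)
  have key : ∀ ω (x : ℕ → X), (∀ n, x n ∈ E n ω) →
      ∀ (a : X) (φ : ℕ → ℕ), StrictMono φ → Tendsto (fun k => x (φ k)) atTop (𝓝 a) →
      a ∈ ⋂ n, E n ω := by
    intro ω x hx a φ hφ hconv
    refine Set.mem_iInter.2 fun m => ?_
    refine (hcl m ω).mem_of_tendsto hconv ?_
    filter_upwards [eventually_ge_atTop m] with k hk
    exact hanti ω (hk.trans hφ.le_apply) (hx (φ k))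
  constructor
  · intro O hO
    set U : ℕ → Set X := fun k => {x | ((k : ℝ≥0∞) + 1)⁻¹ < EMetric.infEdist x Oᶜ} with hU
    have hUopen : ∀ k, IsOpen (U k) := fun k =>
      isOpen_Ioi.preimage EMetric.continuous_infEdist
    have hset : {ω | ((⋂ n, E n ω) ∩ O).Nonempty} =
        ⋃ k : ℕ, ⋂ n, {ω | (E n ω ∩ U k).Nonempty} := by
      ext ω
      simp only [Set.mem_iUnion, Set.mem_iInter, Set.mem_setOf_eq]
      constructor
      · rintro ⟨a, haI, haO⟩
        have hpos : EMetric.infEdist a Oᶜ ≠ 0 := by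
          intro h
          have h2 : a ∈ closure Oᶜ := EMetric.mem_closure_iff_infEdist_zero.2 h
          rw [hO.isClosed_compl.closure_eq] at h2
          exact h2 haO
        obtain ⟨k, hk⟩ := ENNReal.exists_inv_nat_lt hpos
        refine ⟨k, fun n => ⟨a, Set.mem_iInter.1 haI n, ?_⟩⟩
        exact lt_of_le_of_lt (ENNReal.inv_le_inv.2 (by exact_mod_cast Nat.le_succ k)) hk
      · rintro ⟨k, hk⟩
        choose x hx hxU using hk
        obtain ⟨a, φ, hφ, hconv⟩ := hcpt ω x hx
        refine ⟨a, key ω x hx a φ hφ hconv, ?_⟩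
        have hge : ((k : ℝ≥0∞) + 1)⁻¹ ≤ Metric.infEDist a Oᶜ := by
          refine ge_of_tendsto ((EMetric.continuous_infEdist.tendsto a).comp hconv) ?_
          exact Eventually.of_forall fun j => (hxU (φ j)).le
        by_contra haO
        have : a ∈ closure Oᶜ := by
          rw [hO.isClosed_compl.closure_eq]; exact haO
        rw [EMetric.mem_closure_iff_infEdist_zero] at this
        rw [this] at hge
        simp at hge
      
    rw [hset]
    exact MeasurableSet.iUnion fun k =>
      MeasurableSet.iInter fun n => hmeas n (U k) (hUopen k)
  · intro ω
    refine ⟨?_, isClosed_iInter fun n => hcl n ω⟩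
    choose x hx using fun n => hne n ω
    obtain ⟨a, φ, hφ, hconv⟩ := hcpt ω x hx
    exact ⟨a, key ω x hx a φ hφ hconv⟩
end

section
/- Let X be a metric space, Ω a set, and θ : ℝ → (Ω → Ω) a group of transformations (θ_0 = id and θ_{t+s} = θ_t ∘ θ_s). Let Φ : [0,∞) × ℝ × Ω × X → 2^X be a multivalued non-autonomous cocycle on X over θ, and let 𝒟 be an inclusion-closed collection of families of nonempty subsets of X. Assume that Φ is 𝒟-pullback asymptotically compact, that Φ(t, τ, ω, ·) : X → 2^X is upper semicontinuous for each t ≥ 0, τ ∈ ℝ, ω ∈ Ω, and that K ∈ 𝒟 is a closed 𝒟-pullback absorbing set for Φ. Then the Ω-limit set Ω(K) satisfies: (i) Ω(K) ∈ 𝒟 and Ω(K)(τ, ω) is compact for every τ ∈ ℝ and ω ∈ Ω; (ii) Ω(K) is invariant: Φ(t, τ, ω, Ω(K)(τ, ω)) = Ω(K)(τ + t, θ_t ω) for all t ≥ 0; (iii) Ω(K) attracts every member of 𝒟: for every D ∈ 𝒟, τ ∈ ℝ and ω ∈ Ω, lim_{t→∞} d(Φ(t, τ − t, θ_{−t}ω,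 D(τ − t, θ_{−t}ω)), Ω(K)(τ, ω)) = 0, where d denotes the Hausdorff semidistance. If moreover Φ and K are both T-periodic for some T > 0, then Ω(K)(τ + T, ω) = Ω(K)(τ, ω) for all τ ∈ ℝ and ω ∈ Ω. -/
open Filter Topology Set ENNReal

/-- The image of a set under a multivalued map: `Φ(t, τ, ω, S) = ⋃_{x ∈ S} Φ(t, τ, ω, x)`. -/
def imageSet7 {Ω X : Type*} (Φ : ℝ → ℝ → Ω → X → Set X)
    (t τ : ℝ) (ω : Ω) (S : Set X) : Set X :=
  ⋃ x ∈ S, Φ t τ ω x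

/-- The `Ω`-limit set of a family `B`:
`Ω(B)(τ, ω) = ⋂_{r ≥ 0} cl (⋃_{t ≥ r} Φ(t, τ − t, θ_{−t} ω, B(τ − t, θ_{−t} ω)))`. -/
def omegaLimit7 {Ω X : Type*} [MetricSpace X] (Φ : ℝ → ℝ → Ω → X → Set X)
    (θ : ℝ → Ω → Ω) (B : ℝ → Ω → Set X) (τ : ℝ) (ω : Ω) : Set X :=
  ⋂ (r : ℝ) (_ : 0 ≤ r),
    closure (⋃ (t : ℝ) (_ : r ≤ t),
      imageSet7 Φ t (τ - t) (θ (-t) ω) (B (τ - t) (θ (-t) ω)))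

/-- The Hausdorff semidistance `d(A, B) = sup_{a ∈ A} inf_{b ∈ B} d(a, b)` (valued in
`ℝ≥0∞`). -/
noncomputable def hausSemidist7 {X : Type*} [MetricSpace X] (A B : Set X) : ℝ≥0∞ :=
  ⨆ a ∈ A, EMetric.infEdist a B

/-- Properties of the `Ω`-limit set of a closed `𝒟`-pullback absorbing set
`K` of a `𝒟`-pullback asymptotically compact multivalued non-autonomous cocycle `Φ` whose
maps `Φ(t, τ, ω, ·)` are upper semicontinuous: `Ω(K) ∈ 𝒟`, it has compact values, it is
invariant, it attracts every member of `𝒟`, and it is `T`-periodic whenever `Φ` and `K`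
are. -/
theorem stmt7 {Ω X : Type*} [MetricSpace X]
    (θ : ℝ → Ω → Ω) (hθ0 : θ 0 = id)
    (hθadd : ∀ t s : ℝ, θ (t + s) = θ t ∘ θ s)
    (Φ : ℝ → ℝ → Ω → X → Set X)
    -- `Φ` is a multivalued non-autonomous cocycle with nonempty closed values:
    (hΦ0 : ∀ (τ : ℝ) (ω : Ω) (x : X), Φ 0 τ ω x = {x})
    (hΦne : ∀ t : ℝ, 0 ≤ t → ∀ (τ : ℝ) (ω : Ω) (x : X), (Φ t τ ω x).Nonempty)
    (hΦcl : ∀ t : ℝ, 0 ≤ t → ∀ (τ : ℝ) (ω : Ω) (x : X), IsClosed (Φ t τ ω x))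
    (hΦcoc : ∀ t s : ℝ, 0 ≤ t → 0 ≤ s → ∀ (τ : ℝ) (ω : Ω) (x : X),
      Φ (t + s) τ ω x = ⋃ y ∈ Φ s τ ω x, Φ t (τ + s) (θ s ω) y)
    -- `𝒟` is an inclusion-closed collection of families of nonempty subsets of `X`:
    (𝒟 : Set (ℝ → Ω → Set X))
    (h𝒟ne : ∀ D ∈ 𝒟, ∀ (τ : ℝ) (ω : Ω), (D τ ω).Nonempty)
    (h𝒟inc : ∀ D ∈ 𝒟, ∀ D' : ℝ → Ω → Set X,
      (∀ (τ : ℝ) (ω : Ω), D' τ ω ⊆ D τ ω) → (∀ (τ : ℝ) (ω : Ω), (D' τ ω).Nonempty) →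
      D' ∈ 𝒟)
    -- `Φ` is `𝒟`-pullback asymptotically compact:
    (hac : ∀ (τ : ℝ) (ω : Ω), ∀ D ∈ 𝒟, ∀ (t : ℕ → ℝ) (x : ℕ → X),
      Tendsto t atTop atTop →
      (∀ n, x n ∈ imageSet7 Φ (t n) (τ - t n) (θ (-(t n)) ω)
        (D (τ - t n) (θ (-(t n)) ω))) →
      ∃ a : X, ∃ φ : ℕ → ℕ, StrictMono φ ∧ Tendsto (fun k => x (φ k)) atTop (𝓝 a))
    -- `Φ(t, τ, ω, ·)` is upper semicontinuous:
    (husc : ∀ t : ℝ, 0 ≤ t → ∀ (τ : ℝ) (ω : Ω) (x : X), ∀ U : Set X, IsOpen U →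
      Φ t τ ω x ⊆ U → ∃ δ > 0, ∀ x' : X, dist x' x < δ → Φ t τ ω x' ⊆ U)
    -- `K ∈ 𝒟` is a closed `𝒟`-pullback absorbing set of `Φ`:
    (K : ℝ → Ω → Set X) (hK𝒟 : K ∈ 𝒟)
    (hKcl : ∀ (τ : ℝ) (ω : Ω), IsClosed (K τ ω))
    (hKabs : ∀ (τ : ℝ) (ω : Ω), ∀ D ∈ 𝒟, ∃ T > 0, ∀ t : ℝ, T ≤ t →
      imageSet7 Φ t (τ - t) (θ (-t) ω) (D (τ - t) (θ (-t) ω)) ⊆ K τ ω) :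
    -- (i) `Ω(K) ∈ 𝒟` and `Ω(K)(τ, ω)` is compact
    (omegaLimit7 Φ θ K ∈ 𝒟 ∧ ∀ (τ : ℝ) (ω : Ω), IsCompact (omegaLimit7 Φ θ K τ ω)) ∧
    -- (ii) `Ω(K)` is invariant
    (∀ t : ℝ, 0 ≤ t → ∀ (τ : ℝ) (ω : Ω),
      imageSet7 Φ t τ ω (omegaLimit7 Φ θ K τ ω) = omegaLimit7 Φ θ K (τ + t) (θ t ω)) ∧
    -- (iii) `Ω(K)` attracts every member of `𝒟`
    (∀ (τ : ℝ) (ω : Ω), ∀ D ∈ 𝒟,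
      Tendsto (fun t : ℝ => hausSemidist7
          (imageSet7 Φ t (τ - t) (θ (-t) ω) (D (τ - t) (θ (-t) ω)))
          (omegaLimit7 Φ θ K τ ω)) atTop (𝓝 0)) ∧
    -- periodicity
    (∀ T : ℝ, 0 < T →
      (∀ (t τ : ℝ) (ω : Ω), Φ t (τ + T) ω = Φ t τ ω) →
      (∀ (τ : ℝ) (ω : Ω), K (τ + T) ω = K τ ω) →
      ∀ (τ : ℝ) (ω : Ω), omegaLimit7 Φ θ K (τ + T) ω = omegaLimit7 Φ θ K τ ω) := by
  -- θ composition helpers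
  have hθc : ∀ (a b : ℝ) (ω' : Ω), θ a (θ b ω') = θ (a + b) ω' := by
    intro a b ω'
    rw [hθadd a b]; rfl
  have hθ0' : ∀ ω' : Ω, θ 0 ω' = ω' := fun ω' => by rw [hθ0]; rfl
  set A := omegaLimit7 Φ θ K with hA
  -- membership criterion for the Ω-limit set
  have hmem : ∀ (τ : ℝ) (ω : Ω) (a : X), a ∈ A τ ω ↔ ∀ r : ℝ, 0 ≤ r →
      a ∈ closure (⋃ (t : ℝ) (_ : r ≤ t),
        imageSet7 Φ t (τ - t) (θ (-t) ω) (K (τ - t) (θ (-t) ω))) := by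
    intro τ ω a
    simp only [hA, omegaLimit7, Set.mem_iInter]
  -- a subsequence-convergence helper
  have hsq : ∀ (w : ℕ → X) (z : X) (φ : ℕ → ℕ), StrictMono φ →
      (∀ n : ℕ, dist (w n) z < 1/((n:ℝ)+1)) →
      Tendsto (fun k => w (φ k)) atTop (𝓝 z) := by
    intro w z φ hφ hd
    rw [tendsto_iff_dist_tendsto_zero]
    have h2 : Tendsto (fun k : ℕ => 1/((φ k : ℝ)+1)) atTop (𝓝 0) :=
      tendsto_one_div_add_atTop_nhds_zero_nat.comp hφ.tendsto_atTop
    exact squeeze_zero (fun k => dist_nonneg) (fun k => (hd (φ k)).le) h2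
  -- L1: limits of pullback orbits of members of 𝒟 belong to A
  have hL1 : ∀ (τ : ℝ) (ω : Ω) (D : ℝ → Ω → Set X), D ∈ 𝒟 →
      ∀ (t : ℕ → ℝ) (x : ℕ → X) (a : X), Tendsto t atTop atTop →
      (∀ n, x n ∈ imageSet7 Φ (t n) (τ - t n) (θ (-(t n)) ω)
        (D (τ - t n) (θ (-(t n)) ω))) →
      Tendsto x atTop (𝓝 a) → a ∈ A τ ω := by
    intro τ ω D hD t x a ht hx hxa
    rw [hmem]
    intro r hr
    obtain ⟨T, hT0, hT⟩ := hKabs (τ - r) (θ (-r) ω) D hD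
    apply mem_closure_of_tendsto hxa
    filter_upwards [ht.eventually_ge_atTop (r + T)] with n hn
    have htn : 0 ≤ t n - r := by linarith
    obtain ⟨d, hd, hxd⟩ : ∃ d ∈ D (τ - t n) (θ (-(t n)) ω),
        x n ∈ Φ (t n) (τ - t n) (θ (-(t n)) ω) d := by
      simpa [imageSet7] using hx n
    have hc := hΦcoc r (t n - r) hr htn (τ - t n) (θ (-(t n)) ω) d
    rw [show r + (t n - r) = t n by ring] at hc
    rw [hc] at hxd
    simp only [Set.mem_iUnion] at hxd
    obtain ⟨y, hy, hxy⟩ := hxd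
    have hyK : y ∈ K (τ - r) (θ (-r) ω) := by
      apply hT (t n - r) (by linarith)
      have e1 : θ (-(t n - r)) (θ (-r) ω) = θ (-(t n)) ω := by
        rw [hθc]; congr 1; ring
      have e2 : τ - r - (t n - r) = τ - t n := by ring
      rw [e1, e2]
      simp only [imageSet7, Set.mem_iUnion]
      exact ⟨d, hd, hy⟩
    have e3 : τ - t n + (t n - r) = τ - r := by ring
    have e4 : θ (t n - r) (θ (-(t n)) ω) = θ (-r) ω := by
      rw [hθc]; congr 1; ring
    rw [e3, e4] at hxy
    refine Set.mem_iUnion.2 ⟨r, Set.mem_iUnion.2 ⟨le_refl r, ?_⟩⟩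
    simp only [imageSet7, Set.mem_iUnion]
    exact ⟨y, hyK, hxy⟩
  -- A is nonempty
  have hne : ∀ (τ : ℝ) (ω : Ω), (A τ ω).Nonempty := by
    intro τ ω
    have hk : ∀ n : ℕ, ∃ x, x ∈ imageSet7 Φ ((n:ℝ)) (τ - (n:ℝ)) (θ (-((n:ℝ))) ω)
        (K (τ - (n:ℝ)) (θ (-((n:ℝ))) ω)) := by
      intro n
      obtain ⟨k, hk⟩ := h𝒟ne K hK𝒟 (τ - (n:ℝ)) (θ (-((n:ℝ))) ω)
      obtain ⟨x, hx⟩ := hΦne (n:ℝ) (Nat.cast_nonneg n) (τ - (n:ℝ)) (θ (-((n:ℝ))) ω) k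
      exact ⟨x, by simp only [imageSet7, Set.mem_iUnion]; exact ⟨k, hk, hx⟩⟩
    choose x hx using hk
    obtain ⟨a, φ, hφ, hconv⟩ := hac τ ω K hK𝒟 (fun n => (n:ℝ)) x
      tendsto_natCast_atTop_atTop hx
    exact ⟨a, hL1 τ ω K hK𝒟 (fun k => ((φ k : ℕ) : ℝ)) (fun k => x (φ k)) a
      (tendsto_natCast_atTop_atTop.comp hφ.tendsto_atTop) (fun k => hx (φ k)) hconv⟩
  -- A ⊆ K
  have hAK : ∀ (τ : ℝ) (ω : Ω), A τ ω ⊆ K τ ω := by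
    intro τ ω
    obtain ⟨T, hT0, hT⟩ := hKabs τ ω K hK𝒟
    intro a ha
    have h1 := (hmem τ ω a).1 ha T (le_of_lt hT0)
    have hsub : (⋃ (t : ℝ) (_ : T ≤ t),
        imageSet7 Φ t (τ - t) (θ (-t) ω) (K (τ - t) (θ (-t) ω))) ⊆ K τ ω := by
      simp only [Set.iUnion_subset_iff]
      intro t htT
      exact hT t htT
    exact (hKcl τ ω).closure_subset_iff.2 hsub h1
  have hA𝒟 : A ∈ 𝒟 := h𝒟inc K hK𝒟 A hAK hne
  -- approximation from A
  have happrox : ∀ (τ : ℝ) (ω : Ω) (a : X), a ∈ A τ ω → ∀ r : ℝ, 0 ≤ r →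
      ∀ ε : ℝ, 0 < ε → ∃ s : ℝ, r ≤ s ∧ ∃ y ∈ imageSet7 Φ s (τ - s) (θ (-s) ω)
      (K (τ - s) (θ (-s) ω)), dist y a < ε := by
    intro τ ω a ha r hr ε hε
    have h1 := (hmem τ ω a).1 ha r hr
    rw [Metric.mem_closure_iff] at h1
    obtain ⟨y, hy, hdy⟩ := h1 ε hε
    simp only [Set.mem_iUnion] at hy
    obtain ⟨s, hs, hys⟩ := hy
    exact ⟨s, hs, y, hys, by rwa [dist_comm]⟩
  -- A is compact
  have hcompact : ∀ (τ : ℝ) (ω : Ω), IsCompact (A τ ω) := by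
    intro τ ω
    have hseq : IsSeqCompact (A τ ω) := by
      intro a ha
      have hsel : ∀ n : ℕ, ∃ s : ℝ, (n:ℝ) ≤ s ∧ ∃ y ∈ imageSet7 Φ s (τ - s)
          (θ (-s) ω) (K (τ - s) (θ (-s) ω)), dist y (a n) < 1/((n:ℝ)+1) := by
        intro n
        exact happrox τ ω (a n) (ha n) (n:ℝ) (Nat.cast_nonneg n) (1/((n:ℝ)+1))
          (by positivity)
      choose s hs y hy hdy using hsel
      have hts : Tendsto s atTop atTop :=
        tendsto_atTop_mono hs tendsto_natCast_atTop_atTop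
      obtain ⟨b, φ, hφ, hconv⟩ := hac τ ω K hK𝒟 s y hts hy
      have hbA : b ∈ A τ ω := hL1 τ ω K hK𝒟 (fun k => s (φ k)) (fun k => y (φ k)) b
        (hts.comp hφ.tendsto_atTop) (fun k => hy (φ k)) hconv
      refine ⟨b, hbA, φ, hφ, ?_⟩
      have h1 : Tendsto (fun k => dist (y (φ k)) b) atTop (𝓝 0) :=
        tendsto_iff_dist_tendsto_zero.1 hconv
      have h2 : Tendsto (fun k : ℕ => 1/((φ k : ℝ)+1)) atTop (𝓝 0) :=
        tendsto_one_div_add_atTop_nhds_zero_nat.comp hφ.tendsto_atTop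
      have h3 : Tendsto (fun k : ℕ => 1/((φ k : ℝ)+1) + dist (y (φ k)) b) atTop (𝓝 0) := by
        have h4 := h2.add h1; rwa [add_zero] at h4
      have key : Tendsto (fun k => dist (a (φ k)) b) atTop (𝓝 0) := by
        apply squeeze_zero (fun k => dist_nonneg) (fun k => ?_) h3
        calc dist (a (φ k)) b ≤ dist (a (φ k)) (y (φ k)) + dist (y (φ k)) b :=
              dist_triangle _ _ _
          _ ≤ 1/((φ k : ℝ)+1) + dist (y (φ k)) b := by
              rw [dist_comm]
              exact add_le_add (hdy (φ k)).le le_rfl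
      show Tendsto (a ∘ φ) atTop (𝓝 b)
      rw [tendsto_iff_dist_tendsto_zero]
      exact key
    exact hseq.isCompact
  -- closed graph property from USC and closed values
  have hgraph : ∀ t : ℝ, 0 ≤ t → ∀ (τ : ℝ) (ω : Ω) (x z : ℕ → X) (a y : X),
      (∀ n, z n ∈ Φ t τ ω (x n)) → Tendsto x atTop (𝓝 a) → Tendsto z atTop (𝓝 y) →
      y ∈ Φ t τ ω a := by
    intro t ht τ ω x z a y hz hx hzy
    by_contra hy
    have hpos : 0 < Metric.infDist y (Φ t τ ω a) :=
      ((hΦcl t ht τ ω a).notMem_iff_infDist_pos (hΦne t ht τ ω a)).1 hy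
    set ε := Metric.infDist y (Φ t τ ω a) / 2 with hεdef
    have hεpos : 0 < ε := by positivity
    have hU : IsOpen {w : X | ε < dist w y} :=
      isOpen_lt continuous_const (continuous_id.dist continuous_const)
    have hsubU : Φ t τ ω a ⊆ {w : X | ε < dist w y} := by
      intro w hw
      have h2 : Metric.infDist y (Φ t τ ω a) ≤ dist y w :=
        Metric.infDist_le_dist_of_mem hw
      simp only [Set.mem_setOf_eq]
      rw [dist_comm]
      rw [hεdef] at hεpos ⊢
      linarith
    obtain ⟨δ, hδ, hδU⟩ := husc t ht τ ω a _ hU hsubU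
    have h1 : ∀ᶠ n in atTop, dist (x n) a < δ := hx (Metric.ball_mem_nhds a hδ)
    have h2 : ∀ᶠ n in atTop, dist (z n) y < ε := hzy (Metric.ball_mem_nhds y hεpos)
    obtain ⟨n, hn1, hn2⟩ := (h1.and h2).exists
    have : z n ∈ {w : X | ε < dist w y} := hδU (x n) hn1 (hz n)
    simp only [Set.mem_setOf_eq] at this
    linarith
  -- negative invariance: A(τ+t, θ_t ω) ⊆ Φ(t, τ, ω, A(τ, ω))
  have hneg : ∀ t : ℝ, 0 ≤ t → ∀ (τ : ℝ) (ω : Ω),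
      A (τ + t) (θ t ω) ⊆ imageSet7 Φ t τ ω (A τ ω) := by
    intro t ht τ ω z hz
    have hsel : ∀ n : ℕ, ∃ s : ℝ, t + (n:ℝ) ≤ s ∧ ∃ w ∈ imageSet7 Φ s (τ + t - s)
        (θ (-s) (θ t ω)) (K (τ + t - s) (θ (-s) (θ t ω))), dist w z < 1/((n:ℝ)+1) :=
      fun n => happrox (τ + t) (θ t ω) z hz (t + (n:ℝ)) (by positivity) _ (by positivity)
    choose s hs w hw hd using hsel
    have hkey : ∀ n : ℕ, ∃ x ∈ imageSet7 Φ (s n - t) (τ - (s n - t))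
        (θ (-(s n - t)) ω) (K (τ - (s n - t)) (θ (-(s n - t)) ω)), w n ∈ Φ t τ ω x := by
      intro n
      have hn0 : (0:ℝ) ≤ (n:ℝ) := Nat.cast_nonneg n
      have hstn : 0 ≤ s n - t := by linarith [hs n]
      obtain ⟨k, hk, hwk⟩ : ∃ k ∈ K (τ + t - s n) (θ (-(s n)) (θ t ω)),
          w n ∈ Φ (s n) (τ + t - s n) (θ (-(s n)) (θ t ω)) k := by
        simpa [imageSet7] using hw n
      have e1 : θ (-(s n)) (θ t ω) = θ (-(s n - t)) ω := by rw [hθc]; congr 1; ring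
      have e2 : τ + t - s n = τ - (s n - t) := by ring
      rw [e1, e2] at hk hwk
      have hc := hΦcoc t (s n - t) ht hstn (τ - (s n - t)) (θ (-(s n - t)) ω) k
      rw [show t + (s n - t) = s n by ring] at hc
      rw [hc] at hwk
      simp only [Set.mem_iUnion] at hwk
      obtain ⟨x, hx1, hx2⟩ := hwk
      have e3 : τ - (s n - t) + (s n - t) = τ := by ring
      have e4 : θ (s n - t) (θ (-(s n - t)) ω) = ω := by
        rw [hθc, show (s n - t) + -(s n - t) = (0:ℝ) by ring, hθ0']
      rw [e3, e4] at hx2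
      exact ⟨x, by simp only [imageSet7, Set.mem_iUnion]; exact ⟨k, hk, hx1⟩, hx2⟩
    choose x hx hwx using hkey
    have hts : Tendsto (fun n => s n - t) atTop atTop := by
      apply tendsto_atTop_mono (fun n => ?_) tendsto_natCast_atTop_atTop
      linarith [hs n]
    obtain ⟨b, φ, hφ, hconv⟩ := hac τ ω K hK𝒟 (fun n => s n - t) x hts hx
    have hbA : b ∈ A τ ω := hL1 τ ω K hK𝒟 _ _ b (hts.comp hφ.tendsto_atTop)
      (fun k => hx (φ k)) hconv
    have hwz : Tendsto (fun k => w (φ k)) atTop (𝓝 z) := hsq w z φ hφ hd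
    have hzΦ : z ∈ Φ t τ ω b := hgraph t ht τ ω (fun k => x (φ k)) (fun k => w (φ k))
      b z (fun k => hwx (φ k)) hconv hwz
    simp only [imageSet7, Set.mem_iUnion]
    exact ⟨b, hbA, hzΦ⟩
  -- positive invariance: Φ(t, τ, ω, A(τ, ω)) ⊆ A(τ+t, θ_t ω)
  have hposinv : ∀ t : ℝ, 0 ≤ t → ∀ (τ : ℝ) (ω : Ω),
      imageSet7 Φ t τ ω (A τ ω) ⊆ A (τ + t) (θ t ω) := by
    intro t ht τ ω y hy
    obtain ⟨a, ha, hya⟩ : ∃ a ∈ A τ ω, y ∈ Φ t τ ω a := by simpa [imageSet7] using hy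
    rw [hmem]
    intro r hr
    apply subset_closure
    have eθ : θ r (θ (-r) ω) = ω := by
      rw [hθc, show r + -r = (0:ℝ) by ring, hθ0']
    have hsub : A τ ω ⊆ imageSet7 Φ r (τ - r) (θ (-r) ω) (A (τ - r) (θ (-r) ω)) := by
      have h1 := hneg r hr (τ - r) (θ (-r) ω)
      rw [show τ - r + r = τ by ring, eθ] at h1
      exact h1
    obtain ⟨a', ha', haa'⟩ : ∃ a' ∈ A (τ - r) (θ (-r) ω),
        a ∈ Φ r (τ - r) (θ (-r) ω) a' := by simpa [imageSet7] using hsub ha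
    have hc := hΦcoc t r ht hr (τ - r) (θ (-r) ω) a'
    rw [show τ - r + r = τ by ring, eθ] at hc
    have hyin : y ∈ Φ (t + r) (τ - r) (θ (-r) ω) a' := by
      rw [hc]
      simp only [Set.mem_iUnion]
      exact ⟨a, haa', hya⟩
    refine Set.mem_iUnion.2 ⟨t + r, Set.mem_iUnion.2 ⟨by linarith, ?_⟩⟩
    have e5 : τ + t - (t + r) = τ - r := by ring
    have e6 : θ (-(t + r)) (θ t ω) = θ (-r) ω := by rw [hθc]; congr 1; ring
    rw [e5, e6]
    simp only [imageSet7, Set.mem_iUnion]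
    exact ⟨a', hAK _ _ ha', hyin⟩
  -- attraction
  have hattr : ∀ (τ : ℝ) (ω : Ω), ∀ D ∈ 𝒟,
      Tendsto (fun t : ℝ => hausSemidist7
        (imageSet7 Φ t (τ - t) (θ (-t) ω) (D (τ - t) (θ (-t) ω))) (A τ ω))
        atTop (𝓝 0) := by
    intro τ ω D hD
    rw [ENNReal.tendsto_nhds_zero]
    by_contra hcon
    push_neg at hcon
    obtain ⟨ε, hε, hfreq⟩ := hcon
    have hsel : ∀ n : ℕ, ∃ t : ℝ, (n:ℝ) ≤ t ∧ ε < hausSemidist7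
        (imageSet7 Φ t (τ - t) (θ (-t) ω) (D (τ - t) (θ (-t) ω))) (A τ ω) := by
      intro n
      obtain ⟨t, htn, hlt⟩ := (frequently_atTop.1 hfreq) (n:ℝ)
      exact ⟨t, htn, hlt⟩
    choose t ht hlt using hsel
    have hsel2 : ∀ n : ℕ, ∃ x ∈ imageSet7 Φ (t n) (τ - t n) (θ (-(t n)) ω)
        (D (τ - t n) (θ (-(t n)) ω)), ε < EMetric.infEdist x (A τ ω) := by
      intro n
      have h1 := hlt n
      rw [hausSemidist7, lt_iSup_iff] at h1
      obtain ⟨x, hx⟩ := h1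
      rw [lt_iSup_iff] at hx
      obtain ⟨hxS, hx⟩ := hx
      exact ⟨x, hxS, hx⟩
    choose x hx hxd using hsel2
    have hts : Tendsto t atTop atTop :=
      tendsto_atTop_mono ht tendsto_natCast_atTop_atTop
    obtain ⟨a, φ, hφ, hconv⟩ := hac τ ω D hD t x hts hx
    have haA : a ∈ A τ ω := hL1 τ ω D hD _ _ a (hts.comp hφ.tendsto_atTop)
      (fun k => hx (φ k)) hconv
    have hed : Tendsto (fun k => edist (x (φ k)) a) atTop (𝓝 0) := by
      have h1 := hconv.edist (tendsto_const_nhds : Tendsto (fun _ : ℕ => a) atTop (𝓝 a))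
      simpa using h1
    obtain ⟨k, hk⟩ := (hed.eventually_lt_const hε).exists
    have h3 : EMetric.infEdist (x (φ k)) (A τ ω) ≤ edist (x (φ k)) a := by
      calc EMetric.infEdist (x (φ k)) (A τ ω)
          ≤ edist (x (φ k)) a + EMetric.infEdist a (A τ ω) :=
            EMetric.infEdist_le_edist_add_infEdist
        _ = edist (x (φ k)) a := by rw [show EMetric.infEdist a (A τ ω) = 0 from EMetric.infEdist_zero_of_mem haA, add_zero]
    exact absurd ((hxd (φ k)).trans_le h3) (not_lt.2 hk.le)
  -- periodicity
  have hper : ∀ T : ℝ, 0 < T → (∀ (t τ : ℝ) (ω : Ω), Φ t (τ + T) ω = Φ t τ ω) →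
      (∀ (τ : ℝ) (ω : Ω), K (τ + T) ω = K τ ω) →
      ∀ (τ : ℝ) (ω : Ω), A (τ + T) ω = A τ ω := by
    intro T hT hΦp hKp τ ω
    rw [hA]
    unfold omegaLimit7
    refine Set.iInter_congr fun r => Set.iInter_congr fun hr => ?_
    refine congrArg closure (Set.iUnion_congr fun t => Set.iUnion_congr fun htr => ?_)
    rw [show τ + T - t = (τ - t) + T by ring]
    simp only [imageSet7, hKp, hΦp]
  refine ⟨⟨hA𝒟, hcompact⟩, ?_, hattr, hper⟩
  intro t ht τ ω
  exact subset_antisymm (hposinv t ht τ ω) (hneg t ht τ ω)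
end

section
/- Let X be a metric space, Ω a set, and θ : ℝ → (Ω → Ω) a group of transformations. Let Φ be a multivalued non-autonomous cocycle on X over θ, 𝒟 an inclusion-closed collection of families of nonempty subsets of X, and suppose Φ is 𝒟-pullback asymptotically compact, Φ(t, τ, ω, ·) is upper semicontinuous for each t ≥ 0, τ ∈ ℝ, ω ∈ Ω, and K ∈ 𝒟 is a closed 𝒟-pullback absorbing set for Φ. Then for every τ ∈ ℝ and ω ∈ Ω, the Ω-limit set of K admits the representation Ω(K)(τ, ω) = ⋂_{n=1}^∞ cl(⋃_{m=n}^∞ Φ(m, τ − m, θ_{−m}ω, K(τ − m, θ_{−m}ω))), where m ranges over positive integers. -/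
open Filter Topology Set ENNReal

/-- The image of a set under a multivalued map: `Φ(t, τ, ω, S) = ⋃_{x ∈ S} Φ(t, τ, ω, x)`. -/
def imageSet8 {Ω X : Type*} (Φ : ℝ → ℝ → Ω → X → Set X)
    (t τ : ℝ) (ω : Ω) (S : Set X) : Set X :=
  ⋃ x ∈ S, Φ t τ ω x

/-- The `Ω`-limit set of a family `B`:
`Ω(B)(τ, ω) = ⋂_{r ≥ 0} cl (⋃_{t ≥ r} Φ(t, τ − t, θ_{−t} ω, B(τ − t, θ_{−t} ω)))`. -/
def omegaLimit8 {Ω X : Type*} [MetricSpace X] (Φ : ℝ → ℝ → Ω → X → Set X)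
    (θ : ℝ → Ω → Ω) (B : ℝ → Ω → Set X) (τ : ℝ) (ω : Ω) : Set X :=
  ⋂ (r : ℝ) (_ : 0 ≤ r),
    closure (⋃ (t : ℝ) (_ : r ≤ t),
      imageSet8 Φ t (τ - t) (θ (-t) ω) (B (τ - t) (θ (-t) ω)))

/-- The Hausdorff semidistance `d(A, B) = sup_{a ∈ A} inf_{b ∈ B} d(a, b)` (valued in
`ℝ≥0∞`). -/
noncomputable def hausSemidist8 {X : Type*} [MetricSpace X] (A B : Set X) : ℝ≥0∞ :=
  ⨆ a ∈ A, EMetric.infEdist a B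

/-- Under the hypotheses of Statement 7, for every `τ` and `ω` the
`Ω`-limit set of the absorbing set `K` can be represented using integer times:
`Ω(K)(τ, ω) = ⋂_{n ≥ 1} cl (⋃_{m ≥ n} Φ(m, τ − m, θ_{−m} ω, K(τ − m, θ_{−m} ω)))`. -/
theorem stmt8 {Ω X : Type*} [MetricSpace X]
    (θ : ℝ → Ω → Ω) (hθ0 : θ 0 = id)
    (hθadd : ∀ t s : ℝ, θ (t + s) = θ t ∘ θ s)
    (Φ : ℝ → ℝ → Ω → X → Set X)
    (hΦ0 : ∀ (τ : ℝ) (ω : Ω) (x : X), Φ 0 τ ω x = {x})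
    (hΦne : ∀ t : ℝ, 0 ≤ t → ∀ (τ : ℝ) (ω : Ω) (x : X), (Φ t τ ω x).Nonempty)
    (hΦcl : ∀ t : ℝ, 0 ≤ t → ∀ (τ : ℝ) (ω : Ω) (x : X), IsClosed (Φ t τ ω x))
    (hΦcoc : ∀ t s : ℝ, 0 ≤ t → 0 ≤ s → ∀ (τ : ℝ) (ω : Ω) (x : X),
      Φ (t + s) τ ω x = ⋃ y ∈ Φ s τ ω x, Φ t (τ + s) (θ s ω) y)
    (𝒟 : Set (ℝ → Ω → Set X))
    (h𝒟ne : ∀ D ∈ 𝒟, ∀ (τ : ℝ) (ω : Ω), (D τ ω).Nonempty)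
    (h𝒟inc : ∀ D ∈ 𝒟, ∀ D' : ℝ → Ω → Set X,
      (∀ (τ : ℝ) (ω : Ω), D' τ ω ⊆ D τ ω) → (∀ (τ : ℝ) (ω : Ω), (D' τ ω).Nonempty) →
      D' ∈ 𝒟)
    (hac : ∀ (τ : ℝ) (ω : Ω), ∀ D ∈ 𝒟, ∀ (t : ℕ → ℝ) (x : ℕ → X),
      Tendsto t atTop atTop →
      (∀ n, x n ∈ imageSet8 Φ (t n) (τ - t n) (θ (-(t n)) ω)
        (D (τ - t n) (θ (-(t n)) ω))) →
      ∃ a : X, ∃ φ : ℕ → ℕ, StrictMono φ ∧ Tendsto (fun k => x (φ k)) atTop (𝓝 a))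
    (husc : ∀ t : ℝ, 0 ≤ t → ∀ (τ : ℝ) (ω : Ω) (x : X), ∀ U : Set X, IsOpen U →
      Φ t τ ω x ⊆ U → ∃ δ > 0, ∀ x' : X, dist x' x < δ → Φ t τ ω x' ⊆ U)
    (K : ℝ → Ω → Set X) (hK𝒟 : K ∈ 𝒟)
    (hKcl : ∀ (τ : ℝ) (ω : Ω), IsClosed (K τ ω))
    (hKabs : ∀ (τ : ℝ) (ω : Ω), ∀ D ∈ 𝒟, ∃ T > 0, ∀ t : ℝ, T ≤ t →
      imageSet8 Φ t (τ - t) (θ (-t) ω) (D (τ - t) (θ (-t) ω)) ⊆ K τ ω) :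
    ∀ (τ : ℝ) (ω : Ω),
      omegaLimit8 Φ θ K τ ω =
        ⋂ (n : ℕ) (_ : 1 ≤ n),
          closure (⋃ (m : ℕ) (_ : n ≤ m),
            imageSet8 Φ (m : ℝ) (τ - (m : ℝ)) (θ (-(m : ℝ)) ω)
              (K (τ - (m : ℝ)) (θ (-(m : ℝ)) ω))) := by
  intro τ ω
  have hθc : ∀ (a b : ℝ) (ω' : Ω), θ a (θ b ω') = θ (a + b) ω' := by
    intro a b ω'
    rw [hθadd a b]; rfl
  ext z
  simp only [omegaLimit8, mem_iInter]
  constructor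
  · intro hz n hn
    obtain ⟨T, hT0, hT⟩ := hKabs (τ - n) (θ (-(n : ℝ)) ω) K hK𝒟
    have hr0 : (0 : ℝ) ≤ (n : ℝ) + T := by positivity
    have hz' := hz ((n : ℝ) + T) hr0
    refine closure_mono ?_ hz'
    refine iUnion₂_subset fun t ht => ?_
    -- show: set at real time t ⊆ integer-time set at m = n
    refine subset_trans ?_ (subset_iUnion₂ (s := fun (m : ℕ) (_ : n ≤ m) =>
      imageSet8 Φ (m : ℝ) (τ - (m : ℝ)) (θ (-(m : ℝ)) ω)
        (K (τ - (m : ℝ)) (θ (-(m : ℝ)) ω))) n le_rfl)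
    intro w hw
    obtain ⟨x0, hx0, hwx0⟩ := mem_iUnion₂.1 hw
    set s : ℝ := t - n with hs_def
    have hsT : T ≤ s := by
      have : (n : ℝ) + T ≤ t := ht
      simp only [hs_def]; linarith
    have hs0 : 0 ≤ s := le_trans hT0.le hsT
    have hco := hΦcoc (n : ℝ) s (by positivity) hs0 (τ - t) (θ (-t) ω) x0
    have hnst : (n : ℝ) + s = t := by simp [hs_def]
    rw [hnst] at hco
    rw [hco] at hwx0
    obtain ⟨y, hy1, hy2⟩ := mem_iUnion₂.1 hwx0
    have h1 : τ - t + s = τ - n := by simp [hs_def]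
    have h2 : θ s (θ (-t) ω) = θ (-(n : ℝ)) ω := by
      rw [hθc]; congr 1; simp only [hs_def]; ring
    rw [h1, h2] at hy2
    have hTs := hT s hsT
    have h3 : τ - (n : ℝ) - s = τ - t := by simp [hs_def]
    have h4 : θ (-s) (θ (-(n : ℝ)) ω) = θ (-t) ω := by
      rw [hθc]; congr 1; simp only [hs_def]; ring
    rw [h3, h4] at hTs
    have hyK : y ∈ K (τ - n) (θ (-(n : ℝ)) ω) :=
      hTs (mem_iUnion₂.2 ⟨x0, hx0, hy1⟩)
    exact mem_iUnion₂.2 ⟨y, hyK, hy2⟩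
  · intro hz r hr
    set n : ℕ := max 1 ⌈r⌉₊ with hn_def
    have hz' := hz n (le_max_left _ _)
    refine closure_mono ?_ hz'
    refine iUnion₂_subset fun m hm => ?_
    have hrm : r ≤ (m : ℝ) := by
      calc r ≤ (⌈r⌉₊ : ℝ) := Nat.le_ceil r
        _ ≤ (n : ℝ) := by exact_mod_cast le_max_right 1 ⌈r⌉₊
        _ ≤ (m : ℝ) := by exact_mod_cast hm
    exact subset_iUnion₂ (s := fun (t : ℝ) (_ : r ≤ t) =>
      imageSet8 Φ t (τ - t) (θ (-t) ω) (K (τ - t) (θ (-t) ω))) (m : ℝ) hrm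
end

section
/- Let X be a metric space, (Ω, 𝓕) a measurable space, and θ : ℝ → (Ω → Ω) a group of 𝓕-measurable transformations. Let Φ be a multivalued non-autonomous cocycle on X over θ and 𝒟 an inclusion-closed collection of families of nonempty subsets of X. Suppose Φ is 𝒟-pullback asymptotically compact, Φ(t, τ, ω, ·) : X → 2^X is upper semicontinuous for each t ≥ 0, τ ∈ ℝ, ω ∈ Ω, K ∈ 𝒟 is a closed 𝒟-pullback absorbing set of Φ, and for every t ≥ 0 and τ ∈ ℝ the set-valued map ω ↦ Φ(t, τ, ω, K(τ, ω)) is 𝓕-measurable. Then for every τ ∈ ℝ the set-valued map ω ↦ Ω(K)(τ, ω) is 𝓕-measurable. -/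
open Filter Topology Set ENNReal

/-- The image of a set under a multivalued map: `Φ(t, τ, ω, S) = ⋃_{x ∈ S} Φ(t, τ, ω, x)`. -/
def imageSet9 {Ω X : Type*} (Φ : ℝ → ℝ → Ω → X → Set X)
    (t τ : ℝ) (ω : Ω) (S : Set X) : Set X :=
  ⋃ x ∈ S, Φ t τ ω x

/-- The `Ω`-limit set of a family `B`:
`Ω(B)(τ, ω) = ⋂_{r ≥ 0} cl (⋃_{t ≥ r} Φ(t, τ − t, θ_{−t} ω, B(τ − t, θ_{−t} ω)))`. -/
def omegaLimit9 {Ω X : Type*} [MetricSpace X] (Φ : ℝ → ℝ → Ω → X → Set X)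
    (θ : ℝ → Ω → Ω) (B : ℝ → Ω → Set X) (τ : ℝ) (ω : Ω) : Set X :=
  ⋂ (r : ℝ) (_ : 0 ≤ r),
    closure (⋃ (t : ℝ) (_ : r ≤ t),
      imageSet9 Φ t (τ - t) (θ (-t) ω) (B (τ - t) (θ (-t) ω)))

/-- The Hausdorff semidistance `d(A, B) = sup_{a ∈ A} inf_{b ∈ B} d(a, b)` (valued in
`ℝ≥0∞`). -/
noncomputable def hausSemidist9 {X : Type*} [MetricSpace X] (A B : Set X) : ℝ≥0∞ :=
  ⨆ a ∈ A, EMetric.infEdist a B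

/-- If additionally `(Ω, 𝓕)` is a measurable space, the transformations
`θ_t` are measurable, and `ω ↦ Φ(t, τ, ω, K(τ, ω))` is `𝓕`-measurable for every `t ≥ 0`
and `τ ∈ ℝ`, then `ω ↦ Ω(K)(τ, ω)` is `𝓕`-measurable for every `τ ∈ ℝ`. -/
theorem stmt9 {Ω X : Type*} [MetricSpace X] [MeasurableSpace Ω]
    (θ : ℝ → Ω → Ω) (hθ0 : θ 0 = id)
    (hθadd : ∀ t s : ℝ, θ (t + s) = θ t ∘ θ s)
    (hθmeas : ∀ t : ℝ, Measurable (θ t))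
    (Φ : ℝ → ℝ → Ω → X → Set X)
    (hΦ0 : ∀ (τ : ℝ) (ω : Ω) (x : X), Φ 0 τ ω x = {x})
    (hΦne : ∀ t : ℝ, 0 ≤ t → ∀ (τ : ℝ) (ω : Ω) (x : X), (Φ t τ ω x).Nonempty)
    (hΦcl : ∀ t : ℝ, 0 ≤ t → ∀ (τ : ℝ) (ω : Ω) (x : X), IsClosed (Φ t τ ω x))
    (hΦcoc : ∀ t s : ℝ, 0 ≤ t → 0 ≤ s → ∀ (τ : ℝ) (ω : Ω) (x : X),
      Φ (t + s) τ ω x = ⋃ y ∈ Φ s τ ω x, Φ t (τ + s) (θ s ω) y)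
    (𝒟 : Set (ℝ → Ω → Set X))
    (h𝒟ne : ∀ D ∈ 𝒟, ∀ (τ : ℝ) (ω : Ω), (D τ ω).Nonempty)
    (h𝒟inc : ∀ D ∈ 𝒟, ∀ D' : ℝ → Ω → Set X,
      (∀ (τ : ℝ) (ω : Ω), D' τ ω ⊆ D τ ω) → (∀ (τ : ℝ) (ω : Ω), (D' τ ω).Nonempty) →
      D' ∈ 𝒟)
    (hac : ∀ (τ : ℝ) (ω : Ω), ∀ D ∈ 𝒟, ∀ (t : ℕ → ℝ) (x : ℕ → X),
      Tendsto t atTop atTop →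
      (∀ n, x n ∈ imageSet9 Φ (t n) (τ - t n) (θ (-(t n)) ω)
        (D (τ - t n) (θ (-(t n)) ω))) →
      ∃ a : X, ∃ φ : ℕ → ℕ, StrictMono φ ∧ Tendsto (fun k => x (φ k)) atTop (𝓝 a))
    (husc : ∀ t : ℝ, 0 ≤ t → ∀ (τ : ℝ) (ω : Ω) (x : X), ∀ U : Set X, IsOpen U →
      Φ t τ ω x ⊆ U → ∃ δ > 0, ∀ x' : X, dist x' x < δ → Φ t τ ω x' ⊆ U)
    (K : ℝ → Ω → Set X) (hK𝒟 : K ∈ 𝒟)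
    (hKcl : ∀ (τ : ℝ) (ω : Ω), IsClosed (K τ ω))
    (hKabs : ∀ (τ : ℝ) (ω : Ω), ∀ D ∈ 𝒟, ∃ T > 0, ∀ t : ℝ, T ≤ t →
      imageSet9 Φ t (τ - t) (θ (-t) ω) (D (τ - t) (θ (-t) ω)) ⊆ K τ ω)
    -- `ω ↦ Φ(t, τ, ω, K(τ, ω))` is `𝓕`-measurable:
    (hΦKmeas : ∀ t : ℝ, 0 ≤ t → ∀ τ : ℝ, ∀ O : Set X, IsOpen O →
      MeasurableSet {ω : Ω | (imageSet9 Φ t τ ω (K τ ω) ∩ O).Nonempty}) :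
    ∀ τ : ℝ, ∀ O : Set X, IsOpen O →
      MeasurableSet {ω : Ω | (omegaLimit9 Φ θ K τ ω ∩ O).Nonempty} := by

  intro τ O hO
  -- Notation: F t ω := image at pullback time t
  set F : ℝ → Ω → Set X := fun t ω =>
    imageSet9 Φ t (τ - t) (θ (-t) ω) (K (τ - t) (θ (-t) ω)) with hF
  -- Key: the omega-limit set is contained in the closure of F N for every natural N
  have key : ∀ (ω : Ω) (N : ℕ), omegaLimit9 Φ θ K τ ω ⊆ closure (F (N : ℝ) ω) := by
    intro ω N
    obtain ⟨T, hT0, hT⟩ := hKabs (τ - (N : ℝ)) (θ (-(N : ℝ)) ω) K hK𝒟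
    have hsub : ∀ t : ℝ, (N : ℝ) + T ≤ t → F t ω ⊆ F (N : ℝ) ω := by
      intro t ht x hx
      have hs0 : (0 : ℝ) ≤ t - N := by linarith [hT0.le]
      have hsT : T ≤ t - N := by linarith
      simp only [hF, imageSet9, mem_iUnion] at hx
      obtain ⟨x₀, hx₀, hxΦ⟩ := hx
      have e2 : θ (t - (N:ℝ)) (θ (-t) ω) = θ (-(N : ℝ)) ω := by
        have h3 : (t - (N:ℝ)) + (-t) = -(N : ℝ) := by ring
        have := congrFun (hθadd (t - (N:ℝ)) (-t)) ω
        rw [h3] at this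
        exact this.symm
      have hc : Φ t (τ - t) (θ (-t) ω) x₀ =
          ⋃ y ∈ Φ (t - (N:ℝ)) (τ - t) (θ (-t) ω) x₀,
            Φ (N : ℝ) (τ - (N:ℝ)) (θ (-(N : ℝ)) ω) y := by
        have hcoc := hΦcoc (N : ℝ) (t - (N:ℝ)) (Nat.cast_nonneg N) hs0 (τ - t) (θ (-t) ω) x₀
        rw [show (N : ℝ) + (t - (N:ℝ)) = t by ring] at hcoc
        rw [hcoc, show (τ - t) + (t - (N:ℝ)) = τ - (N:ℝ) by ring, e2]
      rw [hc] at hxΦ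
      simp only [mem_iUnion] at hxΦ
      obtain ⟨y, hy, hxy⟩ := hxΦ
      have e4 : θ (-(t - (N:ℝ))) (θ (-(N:ℝ)) ω) = θ (-t) ω := by
        have h3 : (-(t - (N:ℝ))) + (-(N:ℝ)) = -t := by ring
        have := congrFun (hθadd (-(t - (N:ℝ))) (-(N:ℝ))) ω
        rw [h3] at this
        exact this.symm
      have hyK : y ∈ K (τ - (N:ℝ)) (θ (-(N : ℝ)) ω) := by
        apply hT (t - (N:ℝ)) hsT
        rw [show (τ - (N:ℝ)) - (t - (N:ℝ)) = τ - t by ring, e4]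
        simp only [imageSet9, mem_iUnion]
        exact ⟨x₀, hx₀, hy⟩
      simp only [hF, imageSet9, mem_iUnion]
      exact ⟨y, hyK, hxy⟩
    intro x hx
    simp only [omegaLimit9, mem_iInter] at hx
    have hr0 : (0 : ℝ) ≤ (N : ℝ) + T := by positivity
    have hx' := hx ((N : ℝ) + T) hr0
    refine closure_mono ?_ hx'
    exact iUnion₂_subset fun t ht => hsub t ht
  -- the open shrinkings of O
  set U : ℕ → Set X := fun m => {z | ((m : ℝ≥0∞))⁻¹ < EMetric.infEdist z Oᶜ} with hU
  have hUopen : ∀ m, IsOpen (U m) := fun m =>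
    isOpen_lt continuous_const EMetric.continuous_infEdist
  -- main set identity
  have main : {ω : Ω | (omegaLimit9 Φ θ K τ ω ∩ O).Nonempty} =
      ⋃ m : ℕ, ⋂ N : ℕ, {ω : Ω | (F (N : ℝ) ω ∩ U m).Nonempty} := by
    ext ω
    simp only [mem_setOf_eq, mem_iUnion, mem_iInter]
    constructor
    · rintro ⟨x, hxΩ, hxO⟩
      have he : 0 < EMetric.infEdist x Oᶜ := by
        rw [pos_iff_ne_zero]
        intro h0
        have : x ∈ closure Oᶜ := EMetric.mem_closure_iff_infEdist_zero.2 h0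
        rw [hO.isClosed_compl.closure_eq] at this
        exact this hxO
      have he2 : EMetric.infEdist x Oᶜ / 2 ≠ 0 := by
        simp only [ne_eq, ENNReal.div_eq_zero_iff, not_or]
        exact ⟨he.ne', ENNReal.ofNat_ne_top⟩
      obtain ⟨m, hm⟩ := ENNReal.exists_inv_nat_lt he2
      have hmne : ((m : ℝ≥0∞))⁻¹ ≠ ∞ := by
        intro h
        rw [h] at hm
        exact (not_top_lt (hm.trans_le le_top)).elim
      have hmpos : 0 < ((m : ℝ≥0∞))⁻¹ := ENNReal.inv_pos.2 (ENNReal.natCast_ne_top m)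
      have hdbl : ((m : ℝ≥0∞))⁻¹ + ((m : ℝ≥0∞))⁻¹ < EMetric.infEdist x Oᶜ := by
        calc ((m : ℝ≥0∞))⁻¹ + ((m : ℝ≥0∞))⁻¹
            < EMetric.infEdist x Oᶜ / 2 + EMetric.infEdist x Oᶜ / 2 :=
              ENNReal.add_lt_add hm hm
          _ = EMetric.infEdist x Oᶜ := ENNReal.add_halves _
      refine ⟨m, fun N => ?_⟩
      have hxcl : x ∈ closure (F (N : ℝ) ω) := key ω N hxΩ
      obtain ⟨z, hzF, hzd⟩ := EMetric.mem_closure_iff.1 hxcl _ hmpos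
      refine ⟨z, hzF, ?_⟩
      simp only [hU, mem_setOf_eq]
      by_contra hcon
      push_neg at hcon
      have htri : EMetric.infEdist x Oᶜ ≤ EMetric.infEdist z Oᶜ + edist x z :=
        EMetric.infEdist_le_infEdist_add_edist
      have hzne : EMetric.infEdist z Oᶜ ≠ ∞ := ne_top_of_le_ne_top hmne hcon
      have : EMetric.infEdist z Oᶜ + edist x z < ((m : ℝ≥0∞))⁻¹ + ((m : ℝ≥0∞))⁻¹ :=
        ENNReal.add_lt_add_of_le_of_lt hzne hcon hzd
      exact absurd ((htri.trans_lt this).trans hdbl) (lt_irrefl _)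
    · rintro ⟨m, hm⟩
      choose z hzF hzU using hm
      obtain ⟨a, φ, hφ, hconv⟩ := hac τ ω K hK𝒟 (fun n => (n : ℝ)) z
        tendsto_natCast_atTop_atTop (fun n => hzF n)
      refine ⟨a, ?_, ?_⟩
      · simp only [omegaLimit9, mem_iInter]
        intro r hr
        refine mem_closure_of_tendsto hconv ?_
        filter_upwards [eventually_ge_atTop ⌈r⌉₊] with k hk
        have h1 : r ≤ ((φ k : ℕ) : ℝ) := by
          calc r ≤ (⌈r⌉₊ : ℝ) := Nat.le_ceil r
            _ ≤ (k : ℝ) := by exact_mod_cast hk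
            _ ≤ ((φ k : ℕ) : ℝ) := by exact_mod_cast hφ.le_apply
        exact mem_iUnion₂.2 ⟨((φ k : ℕ) : ℝ), h1, hzF (φ k)⟩
      · have hle : ((m : ℝ≥0∞))⁻¹ ≤ EMetric.infEdist a Oᶜ := by
          have hcont : Tendsto (fun k => EMetric.infEdist (z (φ k)) Oᶜ) atTop
              (𝓝 (EMetric.infEdist a Oᶜ)) :=
            (EMetric.continuous_infEdist.tendsto a).comp hconv
          exact ge_of_tendsto' hcont fun k => le_of_lt (by simpa [hU] using hzU (φ k))
        by_contra haO
        have : EMetric.infEdist a Oᶜ = 0 := EMetric.infEdist_zero_of_mem haO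
        rw [this] at hle
        have : ((m : ℝ≥0∞))⁻¹ = 0 := le_antisymm hle zero_le
        exact absurd this (ENNReal.inv_pos.2 (ENNReal.natCast_ne_top m)).ne'
  rw [main]
  refine MeasurableSet.iUnion fun m => MeasurableSet.iInter fun N => ?_
  exact hθmeas (-(N : ℝ))
    (hΦKmeas (N : ℝ) (Nat.cast_nonneg N) (τ - (N : ℝ)) (U m) (hUopen m))
end

section
/- Let X be a separable Banach space and Ω a metric space with Ω = ⋃_{m=1}^∞ Ω_m where each Ω_m is a Borel subset of Ω, and let θ : ℝ → (Ω → Ω) be a group of Borel-measurable transformations. Let Φ be a multivalued non-autonomous cocycle on X over θ and 𝒟 an inclusion-closed collection of families of nonempty subsets of X. Assume Φ is 𝒟-pullback asymptotically compact, Φ(t, τ, ω, ·) : X → 2^X is upper semicontinuous for each t ≥ 0, τ ∈ ℝ, ω ∈ Ω, K ∈ 𝒟 is a closed 𝒟-pullback absorbing set of Φ, and for every m ∈ ℕ, t ≥ 0 and τ ∈ ℝ the set-valued map ω ↦ Φ(t, τ, ω, K(τ, ω)) restricted to Ω_m is weakly upper semicontinuous. Then for every τ ∈ ℝ the set-valued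 map ω ↦ Ω(K)(τ, ω) is measurable with respect to the Borel σ-algebra of Ω. -/
open Filter Topology Set ENNReal

/-- The image of a set under a multivalued map: `Φ(t, τ, ω, S) = ⋃_{x ∈ S} Φ(t, τ, ω, x)`. -/
def imageSet10 {Ω X : Type*} (Φ : ℝ → ℝ → Ω → X → Set X)
    (t τ : ℝ) (ω : Ω) (S : Set X) : Set X :=
  ⋃ x ∈ S, Φ t τ ω x

/-- The `Ω`-limit set of a family `B`:
`Ω(B)(τ, ω) = ⋂_{r ≥ 0} cl (⋃_{t ≥ r} Φ(t, τ − t, θ_{−t} ω, B(τ − t, θ_{−t} ω)))`. -/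
def omegaLimit10 {Ω X : Type*} [MetricSpace X] (Φ : ℝ → ℝ → Ω → X → Set X)
    (θ : ℝ → Ω → Ω) (B : ℝ → Ω → Set X) (τ : ℝ) (ω : Ω) : Set X :=
  ⋂ (r : ℝ) (_ : 0 ≤ r),
    closure (⋃ (t : ℝ) (_ : r ≤ t),
      imageSet10 Φ t (τ - t) (θ (-t) ω) (B (τ - t) (θ (-t) ω)))

/-- The Hausdorff semidistance `d(A, B) = sup_{a ∈ A} inf_{b ∈ B} d(a, b)` (valued in
`ℝ≥0∞`). -/
noncomputable def hausSemidist10 {X : Type*} [MetricSpace X] (A B : Set X) : ℝ≥0∞ :=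
  ⨆ a ∈ A, EMetric.infEdist a B

/-- The pullback image of `K` at time `t`. -/
def FF10 {Ω X : Type*} (Φ : ℝ → ℝ → Ω → X → Set X) (θ : ℝ → Ω → Ω)
    (K : ℝ → Ω → Set X) (τ t : ℝ) (ω : Ω) : Set X :=
  imageSet10 Φ t (τ - t) (θ (-t) ω) (K (τ - t) (θ (-t) ω))

/-- A weak limit of points in a closed convex set lies in the set. -/
lemma weakLimit_mem10 {X : Type*} [NormedAddCommGroup X] [NormedSpace ℝ X]
    {D : Set X} (hconv : Convex ℝ D) (hcl : IsClosed D)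
    {z : ℕ → X} (hz : ∀ n, z n ∈ D) {z₀ : X}
    (h : ∀ ℓ : X →L[ℝ] ℝ, Tendsto (fun n => ℓ (z n)) atTop (𝓝 (ℓ z₀))) : z₀ ∈ D := by
  by_contra h0
  obtain ⟨f, u, hfD, hfz⟩ := geometric_hahn_banach_closed_point hconv hcl h0
  have : f z₀ ≤ u := le_of_tendsto (h f) (Eventually.of_forall fun n => (hfD _ (hz n)).le)
  linarith

/-- A set which is sequentially closed relative to each piece of a countable measurable
cover is measurable. -/
lemma measurable_of_seq10 {Ω : Type*} [MetricSpace Ω] [MeasurableSpace Ω] [BorelSpace Ω]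
    (Ωm : ℕ → Set Ω) (hΩm : ∀ m, MeasurableSet (Ωm m)) (hcover : ⋃ m, Ωm m = Set.univ)
    (S : Set Ω)
    (h : ∀ m : ℕ, ∀ ω₀ ∈ Ωm m, ∀ ω : ℕ → Ω, (∀ n, ω n ∈ S ∩ Ωm m) →
      Tendsto ω atTop (𝓝 ω₀) → ω₀ ∈ S) : MeasurableSet S := by
  have hS : S = ⋃ m, (Ωm m ∩ closure (S ∩ Ωm m)) := by
    apply Subset.antisymm
    · intro ω hω
      have : ω ∈ ⋃ m, Ωm m := by rw [hcover]; trivial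
      obtain ⟨m, hm⟩ := mem_iUnion.1 this
      exact mem_iUnion.2 ⟨m, hm, subset_closure ⟨hω, hm⟩⟩
    · intro ω hω
      obtain ⟨m, hm, hcl⟩ := mem_iUnion.1 hω
      obtain ⟨u, hu, hlim⟩ := mem_closure_iff_seq_limit.1 hcl
      exact h m ω hm u hu hlim
  rw [hS]
  exact MeasurableSet.iUnion fun m => (hΩm m).inter isClosed_closure.measurableSet

/-- Let `X` be a separable Banach space and `Ω` a metric space that is a
countable union of Borel sets `Ω_m`, with a group `θ` of Borel transformations.  If `Φ` is a
`𝒟`-pullback asymptotically compact multivalued non-autonomous cocycle with upper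
semicontinuous maps `Φ(t, τ, ω, ·)`, `K ∈ 𝒟` is a closed `𝒟`-pullback absorbing set, and
`ω ↦ Φ(t, τ, ω, K(τ, ω))` restricted to each `Ω_m` is weakly upper semicontinuous, then
`ω ↦ Ω(K)(τ, ω)` is Borel measurable for every `τ`. -/
theorem stmt10 {Ω X : Type*}
    [NormedAddCommGroup X] [NormedSpace ℝ X] [CompleteSpace X]
    [TopologicalSpace.SeparableSpace X]
    [MetricSpace Ω] [MeasurableSpace Ω] [BorelSpace Ω]
    (Ωm : ℕ → Set Ω) (hΩm : ∀ m, MeasurableSet (Ωm m)) (hΩcover : ⋃ m, Ωm m = univ)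
    (θ : ℝ → Ω → Ω) (hθ0 : θ 0 = id)
    (hθadd : ∀ t s : ℝ, θ (t + s) = θ t ∘ θ s)
    (hθmeas : ∀ t : ℝ, Measurable (θ t))
    (Φ : ℝ → ℝ → Ω → X → Set X)
    (hΦ0 : ∀ (τ : ℝ) (ω : Ω) (x : X), Φ 0 τ ω x = {x})
    (hΦne : ∀ t : ℝ, 0 ≤ t → ∀ (τ : ℝ) (ω : Ω) (x : X), (Φ t τ ω x).Nonempty)
    (hΦcl : ∀ t : ℝ, 0 ≤ t → ∀ (τ : ℝ) (ω : Ω) (x : X), IsClosed (Φ t τ ω x))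
    (hΦcoc : ∀ t s : ℝ, 0 ≤ t → 0 ≤ s → ∀ (τ : ℝ) (ω : Ω) (x : X),
      Φ (t + s) τ ω x = ⋃ y ∈ Φ s τ ω x, Φ t (τ + s) (θ s ω) y)
    (𝒟 : Set (ℝ → Ω → Set X))
    (h𝒟ne : ∀ D ∈ 𝒟, ∀ (τ : ℝ) (ω : Ω), (D τ ω).Nonempty)
    (h𝒟inc : ∀ D ∈ 𝒟, ∀ D' : ℝ → Ω → Set X,
      (∀ (τ : ℝ) (ω : Ω), D' τ ω ⊆ D τ ω) → (∀ (τ : ℝ) (ω : Ω), (D' τ ω).Nonempty) →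
      D' ∈ 𝒟)
    (hac : ∀ (τ : ℝ) (ω : Ω), ∀ D ∈ 𝒟, ∀ (t : ℕ → ℝ) (x : ℕ → X),
      Tendsto t atTop atTop →
      (∀ n, x n ∈ imageSet10 Φ (t n) (τ - t n) (θ (-(t n)) ω)
        (D (τ - t n) (θ (-(t n)) ω))) →
      ∃ a : X, ∃ φ : ℕ → ℕ, StrictMono φ ∧ Tendsto (fun k => x (φ k)) atTop (𝓝 a))
    (husc : ∀ t : ℝ, 0 ≤ t → ∀ (τ : ℝ) (ω : Ω) (x : X), ∀ U : Set X, IsOpen U →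
      Φ t τ ω x ⊆ U → ∃ δ > 0, ∀ x' : X, dist x' x < δ → Φ t τ ω x' ⊆ U)
    (K : ℝ → Ω → Set X) (hK𝒟 : K ∈ 𝒟)
    (hKcl : ∀ (τ : ℝ) (ω : Ω), IsClosed (K τ ω))
    (hKabs : ∀ (τ : ℝ) (ω : Ω), ∀ D ∈ 𝒟, ∃ T > 0, ∀ t : ℝ, T ≤ t →
      imageSet10 Φ t (τ - t) (θ (-t) ω) (D (τ - t) (θ (-t) ω)) ⊆ K τ ω)
    -- `ω ↦ Φ(t, τ, ω, K(τ, ω))` restricted to `Ω_m` is weakly upper semicontinuous: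
    (hwusc : ∀ m : ℕ, ∀ t : ℝ, 0 ≤ t → ∀ τ : ℝ, ∀ ω₀ ∈ Ωm m, ∀ ω : ℕ → Ω,
      (∀ n, ω n ∈ Ωm m) → Tendsto ω atTop (𝓝 ω₀) →
      ∀ z : ℕ → X, (∀ n, z n ∈ imageSet10 Φ t τ (ω n) (K τ (ω n))) →
      ∃ z₀ ∈ imageSet10 Φ t τ ω₀ (K τ ω₀), ∃ φ : ℕ → ℕ, StrictMono φ ∧
        ∀ ℓ : X →L[ℝ] ℝ, Tendsto (fun k => ℓ (z (φ k))) atTop (𝓝 (ℓ z₀))) :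
    ∀ τ : ℝ, ∀ O : Set X, IsOpen O →
      MeasurableSet {ω : Ω | (omegaLimit10 Φ θ K τ ω ∩ O).Nonempty} := by
  intro τ O hO
  -- Step A: eventual nesting of the pullback images, from the cocycle property and absorption
  have stepA : ∀ s : ℝ, 0 ≤ s → ∀ ω : Ω, ∃ T > 0, ∀ t : ℝ, s + T ≤ t →
      FF10 Φ θ K τ t ω ⊆ FF10 Φ θ K τ s ω := by
    intro s hs ω
    obtain ⟨T, hT, habs⟩ := hKabs (τ - s) (θ (-s) ω) K hK𝒟
    refine ⟨T, hT, fun t ht => ?_⟩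
    have hr : 0 ≤ t - s := by linarith
    intro z hz
    obtain ⟨x, hxK, hzx⟩ : ∃ x ∈ K (τ - t) (θ (-t) ω), z ∈ Φ t (τ - t) (θ (-t) ω) x := by
      simpa [FF10, imageSet10] using hz
    have hts : s + (t - s) = t := by ring
    have hcoc := hΦcoc s (t - s) hs hr (τ - t) (θ (-t) ω) x
    rw [hts] at hcoc
    rw [hcoc] at hzx
    obtain ⟨y, hy, hzy⟩ : ∃ y ∈ Φ (t - s) (τ - t) (θ (-t) ω) x,
        z ∈ Φ s (τ - t + (t - s)) (θ (t - s) (θ (-t) ω)) y := by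
      simpa using hzx
    have hθ1 : θ (t - s) (θ (-t) ω) = θ (-s) ω := by
      have h := hθadd (t - s) (-t)
      rw [show t - s + -t = -s by ring] at h
      exact (congrFun h ω).symm
    have hθ2 : θ (-(t - s)) (θ (-s) ω) = θ (-t) ω := by
      have h := hθadd (-(t - s)) (-s)
      rw [show -(t - s) + -s = -t by ring] at h
      exact (congrFun h ω).symm
    have hyK : y ∈ K (τ - s) (θ (-s) ω) := by
      apply habs (t - s) (by linarith)
      rw [show τ - s - (t - s) = τ - t by ring, hθ2]
      exact mem_iUnion₂.2 ⟨x, hxK, hy⟩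
    have hzy' : z ∈ Φ s (τ - s) (θ (-s) ω) y := by
      rwa [show τ - t + (t - s) = τ - s by ring, hθ1] at hzy
    exact mem_iUnion₂.2 ⟨y, hyK, hzy'⟩
  -- Core measurability: hitting a closed ball at a fixed nonnegative time is measurable
  have coreMeas : ∀ q : ℝ, 0 ≤ q → ∀ (c : X) (ρ : ℝ),
      MeasurableSet {ω : Ω | (FF10 Φ θ K τ q ω ∩ Metric.closedBall c ρ).Nonempty} := by
    intro q hq c ρ
    have key : MeasurableSet {ω' : Ω |
        (imageSet10 Φ q (τ - q) ω' (K (τ - q) ω') ∩ Metric.closedBall c ρ).Nonempty} := by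
      apply measurable_of_seq10 Ωm hΩm hΩcover
      intro m ω₀ hω₀ ωs hωs hlim
      choose z hz using fun n => (hωs n).1
      obtain ⟨z₀, hz₀mem, φ, hφ, hweak⟩ :=
        hwusc m q hq (τ - q) ω₀ hω₀ ωs (fun n => (hωs n).2) hlim z (fun n => (hz n).1)
      have hz₀D : z₀ ∈ Metric.closedBall c ρ :=
        weakLimit_mem10 (convex_closedBall c ρ) Metric.isClosed_closedBall
          (fun k => (hz (φ k)).2) hweak
      exact ⟨z₀, hz₀mem, hz₀D⟩
    exact hθmeas (-q) key
  -- Dense sequence in X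
  have dR : DenseRange (TopologicalSpace.denseSeq X) := TopologicalSpace.denseRange_denseSeq X
  set d : ℕ → X := TopologicalSpace.denseSeq X with hd
  -- The main set identity
  have main : {ω : Ω | (omegaLimit10 Φ θ K τ ω ∩ O).Nonempty} =
      ⋃ (i : ℕ) (p : ℚ) (_ : 0 < (p : ℝ)) (_ : Metric.closedBall (d i) (p : ℝ) ⊆ O),
        ⋂ (j : ℕ) (n : ℕ), ⋃ (q : ℚ) (_ : (n : ℝ) ≤ (q : ℝ)),
          {ω : Ω | (FF10 Φ θ K τ (q : ℝ) ω ∩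
            Metric.closedBall (d i) ((p : ℝ) + 1 / (j + 1))).Nonempty} := by
    ext ω
    simp only [mem_iUnion, mem_iInter, mem_setOf_eq, exists_prop]
    constructor
    · rintro ⟨a, haΩ, haO⟩
      obtain ⟨ε, hε, hball⟩ := Metric.isOpen_iff.1 hO a haO
      obtain ⟨i, hdi⟩ := dR.exists_dist_lt a (show (0 : ℝ) < ε / 4 by linarith)
      obtain ⟨p, hp1, hp2⟩ := exists_rat_btwn (show ε / 4 < ε / 2 by linarith)
      have hpO : Metric.closedBall (d i) (p : ℝ) ⊆ O := by
        intro y hy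
        apply hball
        have h1 : dist y (d i) ≤ (p : ℝ) := Metric.mem_closedBall.1 hy
        have h2 : dist y a ≤ dist y (d i) + dist (d i) a := dist_triangle _ _ _
        rw [dist_comm (d i) a] at h2
        exact Metric.mem_ball.2 (by linarith)
      refine ⟨i, p, by linarith, hpO, fun j n => ?_⟩
      refine ⟨(n : ℚ), by push_cast; exact le_refl _, ?_⟩
      rw [show (((n : ℚ) : ℝ)) = (n : ℝ) by push_cast; ring]
      obtain ⟨T, hT, hnest⟩ := stepA (n : ℝ) (Nat.cast_nonneg n) ω
      have haΩ' : ∀ r : ℝ, 0 ≤ r → a ∈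
          closure (⋃ (t : ℝ) (_ : r ≤ t), FF10 Φ θ K τ t ω) := by
        intro r hr
        have := mem_iInter.1 haΩ r
        exact mem_iInter.1 this hr
      have hsub : (⋃ (t : ℝ) (_ : (n : ℝ) + T ≤ t), FF10 Φ θ K τ t ω) ⊆
          FF10 Φ θ K τ (n : ℝ) ω :=
        iUnion₂_subset fun t ht => hnest t ht
      have hacl : a ∈ closure (FF10 Φ θ K τ (n : ℝ) ω) :=
        closure_mono hsub (haΩ' ((n : ℝ) + T) (by positivity))
      obtain ⟨x', hx'F, hx'd⟩ := Metric.mem_closure_iff.1 hacl (1 / (j + 1))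
        (by positivity)
      refine ⟨x', hx'F, ?_⟩
      have h1 : dist x' (d i) ≤ dist x' a + dist a (d i) := dist_triangle _ _ _
      rw [dist_comm x' a] at h1
      have h2 : dist a (d i) ≤ (p : ℝ) := by linarith
      exact Metric.mem_closedBall.2 (by linarith)
    · rintro ⟨i, p, hp0, hpO, h⟩
      choose q hq hne using fun n => h n n
      choose x hx using hne
      obtain ⟨a, φ, hφ, hconv⟩ := hac τ ω K hK𝒟 (fun n => (q n : ℝ)) x
        (tendsto_atTop_mono (fun n => hq n) tendsto_natCast_atTop_atTop)
        (fun n => (hx n).1)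
      have hφk : ∀ k : ℕ, (k : ℝ) ≤ (q (φ k) : ℝ) := fun k =>
        le_trans (Nat.cast_le.2 hφ.le_apply) (hq (φ k))
      have haD : a ∈ Metric.closedBall (d i) (p : ℝ) := by
        have hlim1 : Tendsto (fun k => dist (x (φ k)) (d i)) atTop (𝓝 (dist a (d i))) :=
          (hconv.dist tendsto_const_nhds)
        have hlim2 : Tendsto (fun k : ℕ => (p : ℝ) + 1 / (k + 1)) atTop (𝓝 ((p : ℝ))) := by
          have h2 : Tendsto (fun k : ℕ => (p : ℝ) + 1 / (k + 1)) atTop (𝓝 ((p : ℝ) + 0)) :=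
            Tendsto.add tendsto_const_nhds tendsto_one_div_add_atTop_nhds_zero_nat
          simpa using h2
        have hle : ∀ k : ℕ, dist (x (φ k)) (d i) ≤ (p : ℝ) + 1 / (k + 1) := by
          intro k
          have h1 : dist (x (φ k)) (d i) ≤ (p : ℝ) + 1 / (φ k + 1) :=
            Metric.mem_closedBall.1 (hx (φ k)).2
          have h3 : (1 : ℝ) / (φ k + 1) ≤ 1 / (k + 1) := by
            apply one_div_le_one_div_of_le (by positivity)
            have : (k : ℝ) ≤ (φ k : ℝ) := Nat.cast_le.2 hφ.le_apply
            linarith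
          linarith
        exact Metric.mem_closedBall.2 (le_of_tendsto_of_tendsto' hlim1 hlim2 hle)
      refine ⟨a, ?_, hpO haD⟩
      refine mem_iInter.2 fun r => mem_iInter.2 fun hr => ?_
      apply mem_closure_of_tendsto hconv
      filter_upwards [eventually_ge_atTop ⌈r⌉₊] with k hk
      apply mem_iUnion₂.2
      refine ⟨(q (φ k) : ℝ), ?_, (hx (φ k)).1⟩
      have h1 : r ≤ (⌈r⌉₊ : ℝ) := Nat.le_ceil r
      have h2 : ((⌈r⌉₊ : ℕ) : ℝ) ≤ (k : ℝ) := Nat.cast_le.2 hk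
      have h3 := hφk k
      linarith
  rw [main]
  apply MeasurableSet.iUnion; intro i
  apply MeasurableSet.iUnion; intro p
  apply MeasurableSet.iUnion; intro hp
  apply MeasurableSet.iUnion; intro hpO
  apply MeasurableSet.iInter; intro j
  apply MeasurableSet.iInter; intro n
  apply MeasurableSet.iUnion; intro q
  apply MeasurableSet.iUnion; intro hq
  exact coreMeas (q : ℝ) (le_trans (Nat.cast_nonneg n) hq) (d i) ((p : ℝ) + 1 / (j + 1))
end

section
/- Let α > 0 and m ∈ ℕ, m ≥ 1. Suppose ω_n (n ∈ ℕ) and ω belong to Ω_m and ω_n → ω uniformly on every compact subset of ℝ. Then for every compact interval [a, b] ⊆ ℝ, y(θ_t ω_n) → y(θ_t ω) uniformly for t ∈ [a, b] as n → ∞. In particular, if t_n → t in ℝ, then y(θ_{t_n} ω_n) → y(θ_t ω). -/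
open Filter Topology MeasureTheory

/-- The Wiener shift: `(θ_t ω)(s) = ω(s + t) − ω(t)`. -/
def shiftOU (t : ℝ) (ω : ℝ → ℝ) : ℝ → ℝ := fun s => ω (s + t) - ω t

/-- The random variable `y(ω) = −α ∫_{−∞}^0 e^{ατ} ω(τ) dτ`. -/
noncomputable def yOU (α : ℝ) (ω : ℝ → ℝ) : ℝ :=
  -α * ∫ τ in Set.Iic (0 : ℝ), Real.exp (α * τ) * ω τ

/-- Membership in `Ω_m`: for all `|t| ≥ m`, `|ω(t)| ≤ |t|` and
`|∫_0^t |y(θ_r ω)|² dr| ≤ |t|/α`. -/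
noncomputable def memOmegaM (α : ℝ) (m : ℕ) (ω : ℝ → ℝ) : Prop :=
  ∀ t : ℝ, (m : ℝ) ≤ |t| →
    |ω t| ≤ |t| ∧ |∫ r in (0 : ℝ)..t, (yOU α (shiftOU r ω)) ^ 2| ≤ |t| / α

section OUauxSection

open Real Set


lemma OUaux.integrableOn_exp_mul {β : ℝ} (hβ : 0 < β) :
    IntegrableOn (fun τ => Real.exp (β * τ)) (Iic (0:ℝ)) := by
  have h1 : IntegrableOn Real.exp (Iic (0:ℝ)) := integrableOn_exp_Iic 0
  have h2 : Integrable (fun x => ((Iic (0:ℝ)).indicator Real.exp) (β * x)) :=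
    (integrable_comp_mul_left_iff _ hβ.ne').2 ((integrable_indicator_iff measurableSet_Iic).2 h1)
  have h3 : (fun x => ((Iic (0:ℝ)).indicator Real.exp) (β * x))
      = (Iic (0:ℝ)).indicator (fun τ => Real.exp (β * τ)) := by
    funext x
    by_cases hx : x ≤ 0
    · rw [indicator_of_mem (mem_Iic.2 hx),
        indicator_of_mem (mem_Iic.2 (mul_nonpos_of_nonneg_of_nonpos hβ.le hx))]
    · push_neg at hx
      rw [indicator_of_notMem (by simpa using not_le.2 (mul_pos hβ hx)),
        indicator_of_notMem (by simpa using not_le.2 hx)]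
  rw [h3] at h2
  exact (integrable_indicator_iff measurableSet_Iic).1 h2

lemma OUaux.abs_mul_exp_le {β : ℝ} (hβ : 0 < β) {τ : ℝ} (hτ : τ ≤ 0) :
    |τ| * Real.exp (β * τ) ≤ 1 / β := by
  rw [abs_of_nonpos hτ]
  have h := Real.add_one_le_exp (-(β * τ))
  rw [Real.exp_neg] at h
  have hp := Real.exp_pos (β * τ)
  rw [le_div_iff₀ hβ]
  have h2 : (1 - β * τ) * Real.exp (β * τ) ≤ 1 := by
    rw [← one_div] at h
    have := (le_div_iff₀ hp).1 (by linarith : 1 - β * τ ≤ 1 / Real.exp (β * τ))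
    linarith
  nlinarith

lemma OUaux.key_bound {α : ℝ} (hα : 0 < α) {τ : ℝ} (hτ : τ ≤ 0) {c D : ℝ}
    (hc : 0 ≤ c) (hD : 0 ≤ D) :
    Real.exp (α * τ) * (c * |τ| + D) ≤ (c * (2 / α) + D) * Real.exp (α / 2 * τ) := by
  have h1 : Real.exp (α * τ) = Real.exp (α / 2 * τ) * Real.exp (α / 2 * τ) := by
    rw [← Real.exp_add]; ring_nf
  have h2 : |τ| * Real.exp (α / 2 * τ) ≤ 2 / α := by
    have h := OUaux.abs_mul_exp_le (half_pos hα) hτ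
    rwa [one_div_div] at h
  have h3 : Real.exp (α / 2 * τ) ≤ 1 :=
    Real.exp_le_one_iff.2 (mul_nonpos_of_nonneg_of_nonpos (half_pos hα).le hτ)
  have hp := Real.exp_pos (α / 2 * τ)
  rw [h1]
  set E := Real.exp (α / 2 * τ)
  calc E * E * (c * |τ| + D) = (c * (|τ| * E) + D * E) * E := by ring
    _ ≤ (c * (2 / α) + D * 1) * E := by
        refine mul_le_mul_of_nonneg_right (add_le_add ?_ ?_) hp.le
        · exact mul_le_mul_of_nonneg_left h2 hc
        · exact mul_le_mul_of_nonneg_left h3 hD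
    _ = (c * (2 / α) + D) * E := by ring

lemma OUaux.linear_bound {g : ℝ → ℝ} {m : ℕ} (hc : Continuous g)
    (hg : ∀ t : ℝ, (m : ℝ) ≤ |t| → |g t| ≤ |t|) :
    ∃ C : ℝ, 0 ≤ C ∧ ∀ s, |g s| ≤ |s| + C := by
  obtain ⟨C, hC⟩ := (isCompact_Icc (a := -(m:ℝ)) (b := (m:ℝ))).exists_bound_of_continuousOn
    hc.continuousOn
  refine ⟨max C 0, le_max_right _ _, fun s => ?_⟩
  by_cases hs : (m : ℝ) ≤ |s|
  · have := hg s hs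
    have := le_max_right C 0
    linarith
  · push_neg at hs
    have hmem : s ∈ Icc (-(m:ℝ)) (m:ℝ) := by
      constructor <;> [linarith [neg_abs_le s]; linarith [le_abs_self s]]
    have := hC s hmem
    rw [Real.norm_eq_abs] at this
    have := le_max_left C 0
    have := abs_nonneg s
    linarith

lemma OUaux.int_shift {α : ℝ} (hα : 0 < α) {g : ℝ → ℝ} (hc : Continuous g) {C : ℝ} (hC : 0 ≤ C)
    (hg : ∀ s, |g s| ≤ |s| + C) (t : ℝ) :
    IntegrableOn (fun τ => Real.exp (α * τ) * (g (τ + t) - g t)) (Iic (0:ℝ)) := by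
  have hcont : Continuous fun τ => Real.exp (α * τ) * (g (τ + t) - g t) :=
    (Real.continuous_exp.comp (continuous_const.mul continuous_id)).mul
      ((hc.comp (continuous_id.add continuous_const)).sub continuous_const)
  refine Integrable.mono'
    (((OUaux.integrableOn_exp_mul (half_pos hα)).const_mul ((1 : ℝ) * (2 / α) + (2 * |t| + 2 * C))))
    hcont.aestronglyMeasurable.restrict ?_
  filter_upwards [ae_restrict_mem measurableSet_Iic] with τ hτ
  rw [Real.norm_eq_abs, abs_mul, abs_of_pos (Real.exp_pos _)]
  have h1 : |g (τ + t) - g t| ≤ 1 * |τ| + (2 * |t| + 2 * C) := by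
    have := hg (τ + t)
    have := hg t
    have := abs_sub (g (τ + t)) (g t)
    have := abs_add_le τ t
    calc |g (τ + t) - g t| ≤ |g (τ + t)| + |g t| := abs_sub _ _
      _ ≤ (|τ + t| + C) + (|t| + C) := add_le_add (hg _) (hg _)
      _ ≤ (|τ| + |t| + C) + (|t| + C) := by linarith [abs_add_le τ t]
      _ = 1 * |τ| + (2 * |t| + 2 * C) := by ring
  calc Real.exp (α * τ) * |g (τ + t) - g t| ≤ Real.exp (α * τ) * (1 * |τ| + (2 * |t| + 2 * C)) :=
        mul_le_mul_of_nonneg_left h1 (Real.exp_pos _).le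
    _ ≤ (1 * (2 / α) + (2 * |t| + 2 * C)) * Real.exp (α / 2 * τ) :=
        OUaux.key_bound hα hτ zero_le_one (by positivity)

lemma OUaux.main {α : ℝ} (hα : 0 < α) (m : ℕ) (hm : 1 ≤ m)
    (ω : ℕ → ℝ → ℝ) (ω₀ : ℝ → ℝ)
    (hcont : ∀ n, Continuous (ω n)) (hcont₀ : Continuous ω₀)
    (hmem : ∀ n, ∀ t : ℝ, (m : ℝ) ≤ |t| → |ω n t| ≤ |t|)
    (hmem₀ : ∀ t : ℝ, (m : ℝ) ≤ |t| → |ω₀ t| ≤ |t|)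
    (hconv : ∀ K : Set ℝ, IsCompact K → TendstoUniformlyOn (fun n => ω n) ω₀ atTop K)
    (a b : ℝ) :
    TendstoUniformlyOn
      (fun n t => -α * ∫ τ in Iic (0:ℝ), Real.exp (α * τ) * (ω n (τ + t) - ω n t))
      (fun t => -α * ∫ τ in Iic (0:ℝ), Real.exp (α * τ) * (ω₀ (τ + t) - ω₀ t))
      atTop (Icc a b) := by
  rw [Metric.tendstoUniformlyOn_iff]
  intro ε hε
  set T : ℝ := max |a| |b| with hT
  have hT0 : 0 ≤ T := le_trans (abs_nonneg a) (le_max_left _ _)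
  set K4 : ℝ := ∫ τ in Iic (0:ℝ), Real.exp (α/4 * τ) with hK4
  set K1 : ℝ := ∫ τ in Iic (0:ℝ), Real.exp (α * τ) with hK1
  have hK4nonneg : 0 ≤ K4 := setIntegral_nonneg measurableSet_Iic fun τ _ => (Real.exp_pos _).le
  have hK1nonneg : 0 ≤ K1 := setIntegral_nonneg measurableSet_Iic fun τ _ => (Real.exp_pos _).le
  set B : ℝ := 2 * (2 / α) + (2 * T + 1) with hB
  have hBpos : 0 < B := by positivity
  -- choose R
  have hRlim : Tendsto (fun R : ℝ => α * (B * Real.exp (-(α/4 * R)) * K4)) atTop (𝓝 0) := by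
    have h0 : Tendsto (fun R : ℝ => (α/4) * R) atTop atTop :=
      (tendsto_const_mul_atTop_of_pos (by positivity)).2 tendsto_id
    have h1 : Tendsto (fun R : ℝ => -(α/4 * R)) atTop atBot :=
      tendsto_neg_atTop_atBot.comp h0
    have h2 : Tendsto (fun R : ℝ => Real.exp (-(α/4 * R))) atTop (𝓝 0) :=
      Real.tendsto_exp_atBot.comp h1
    have := ((h2.const_mul B).mul_const K4).const_mul α
    simpa using this
  obtain ⟨R, hR2, hR1⟩ :
      ∃ R : ℝ, α * (B * Real.exp (-(α/4 * R)) * K4) < ε/2 ∧ (m : ℝ) + T ≤ R :=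
    ((hRlim.eventually_lt_const (half_pos hε)).and (eventually_ge_atTop _)).exists
  have hm1 : (1:ℝ) ≤ (m:ℝ) := by exact_mod_cast hm
  have hRpos : (1:ℝ) ≤ R := by linarith
  have hR0 : -R ≤ 0 := by linarith
  -- choose δ
  set δ : ℝ := min 1 (ε / (4 * α * (K1 + 1))) with hδ
  have hδpos : 0 < δ := lt_min one_pos (by positivity)
  have hδ1 : δ ≤ 1 := min_le_left _ _
  have hδ2 : α * (2 * δ * K1) < ε / 2 := by
    have h1 : δ ≤ ε / (4 * α * (K1 + 1)) := min_le_right _ _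
    have h2 : α * (2 * δ * K1) ≤ α * (2 * (ε / (4 * α * (K1 + 1))) * K1) := by
      apply mul_le_mul_of_nonneg_left _ hα.le
      apply mul_le_mul_of_nonneg_right _ hK1nonneg
      linarith
    have h3 : α * (2 * (ε / (4 * α * (K1 + 1))) * K1) < ε / 2 := by
      have he : α * (2 * (ε / (4 * α * (K1 + 1))) * K1) = ε * (K1 / (2 * (K1 + 1))) := by
        field_simp
        ring
      have h4 : K1 / (2 * (K1 + 1)) < 1 / 2 := by
        rw [div_lt_iff₀ (by positivity)]
        linarith
      rw [he]
      calc ε * (K1 / (2 * (K1 + 1))) < ε * (1 / 2) := mul_lt_mul_of_pos_left h4 hε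
        _ = ε / 2 := by ring
    linarith
  clear_value T K4 K1 B δ
  -- the eventual estimate
  have hconvR := hconv (Icc (a - R) b) isCompact_Icc
  rw [Metric.tendstoUniformlyOn_iff] at hconvR
  filter_upwards [hconvR δ hδpos] with n hn t ht
  -- g = ω₀ - ω n
  set g : ℝ → ℝ := fun s => ω₀ s - ω n s with hgdef
  have hgcont : Continuous g := hcont₀.sub (hcont n)
  have hgsmall : ∀ s ∈ Icc (a - R) b, |g s| < δ := fun s hs => by
    have := hn s hs; rwa [Real.dist_eq] at this
  have hgtail : ∀ s : ℝ, (m : ℝ) ≤ |s| → |g s| ≤ 2 * |s| := fun s hs => by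
    have h1 := hmem₀ s hs; have h2 := hmem n s hs
    calc |g s| ≤ |ω₀ s| + |ω n s| := abs_sub _ _
      _ ≤ 2 * |s| := by linarith
  obtain ⟨C₀, hC₀, hg₀⟩ := OUaux.linear_bound hcont₀ hmem₀
  obtain ⟨Cn, hCn, hgn⟩ := OUaux.linear_bound (hcont n) (hmem n)
  have hint₀ := OUaux.int_shift hα hcont₀ hC₀ hg₀ t
  have hintn := OUaux.int_shift hα (hcont n) hCn hgn t
  have htT : |t| ≤ T := by
    rw [abs_le]
    constructor
    · linarith [neg_abs_le a, le_max_left |a| |b|, ht.1]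
    · linarith [le_abs_self b, le_max_right |a| |b|, ht.2]
  have htabs : t ≤ T := le_trans (le_abs_self t) htT
  have hta : -T ≤ t := le_trans (neg_le_neg htT) (neg_abs_le t)
  rw [Real.dist_eq, ← mul_sub, abs_mul, abs_neg, abs_of_pos hα, ← integral_sub hint₀ hintn]
  have heq : (fun τ => Real.exp (α*τ) * (ω₀ (τ+t) - ω₀ t) - Real.exp (α*τ) * (ω n (τ+t) - ω n t))
      = fun τ => Real.exp (α*τ) * (g (τ+t) - g t) := by
    funext τ; simp only [hgdef]; ring
  rw [heq]
  have hwint : IntegrableOn (fun τ => Real.exp (α*τ) * (g (τ+t) - g t)) (Iic (0:ℝ)) := by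
    rw [← heq]; exact hint₀.sub hintn
  set w : ℝ → ℝ := fun τ => Real.exp (α*τ) * (g (τ+t) - g t) with hw
  have hsplit : (∫ τ in Iic (0:ℝ), ‖w τ‖) = (∫ τ in Iic (-R), ‖w τ‖) + ∫ τ in Ioc (-R) (0:ℝ), ‖w τ‖ := by
    rw [← setIntegral_union (Iic_disjoint_Ioc le_rfl) measurableSet_Ioc
      (IntegrableOn.mono_set hwint.norm (Iic_subset_Iic.2 hR0)) (IntegrableOn.mono_set hwint.norm Ioc_subset_Iic_self),
      Iic_union_Ioc_eq_Iic hR0]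
  have habs : |∫ τ in Iic (0:ℝ), w τ| ≤ ∫ τ in Iic (0:ℝ), ‖w τ‖ := by
    rw [← Real.norm_eq_abs]; exact norm_integral_le_integral_norm w
  have hφint : IntegrableOn (fun τ => B * Real.exp (-(α/4 * R)) * Real.exp (α/4 * τ)) (Iic (0:ℝ)) :=
    (OUaux.integrableOn_exp_mul (by positivity : (0:ℝ) < α/4)).const_mul _
  have htail : (∫ τ in Iic (-R), ‖w τ‖) ≤ B * Real.exp (-(α/4 * R)) * K4 := by
    have hpoint : ∀ τ ∈ Iic (-R), ‖w τ‖ ≤ B * Real.exp (-(α/4 * R)) * Real.exp (α/4 * τ) := by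
      intro τ hτmem
      have hτR : τ ≤ -R := hτmem
      have hτ0 : τ ≤ 0 := by linarith
      have habs1 : (m : ℝ) ≤ |τ + t| := by
        rw [abs_of_nonpos (by linarith : τ + t ≤ 0)]
        linarith
      have h2 : |g (τ+t)| ≤ 2 * |τ+t| := hgtail _ habs1
      have h3 : |τ+t| ≤ |τ| + T := le_trans (abs_add_le τ t) (by linarith)
      have h4 : |g t| ≤ δ := (hgsmall t ⟨by linarith [ht.1], ht.2⟩).le
      have h5 : |g (τ+t) - g t| ≤ 2 * |τ| + (2*T + 1) := by
        calc |g (τ+t) - g t| ≤ |g (τ+t)| + |g t| := abs_sub _ _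
          _ ≤ 2*(|τ| + T) + δ := by linarith
          _ ≤ 2*|τ| + (2*T+1) := by linarith
      have h6 : ‖w τ‖ ≤ Real.exp (α*τ) * (2*|τ| + (2*T+1)) := by
        rw [hw, Real.norm_eq_abs, abs_mul, abs_of_pos (Real.exp_pos _)]
        exact mul_le_mul_of_nonneg_left h5 (Real.exp_pos _).le
      have h7 := OUaux.key_bound hα hτ0 (c := 2) (D := 2*T+1) (by norm_num) (by linarith)
      rw [← hB] at h7
      have h8 : Real.exp (α/2 * τ) ≤ Real.exp (-(α/4 * R)) * Real.exp (α/4 * τ) := by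
        rw [← Real.exp_add]
        apply Real.exp_le_exp.2
        nlinarith
      calc ‖w τ‖ ≤ B * Real.exp (α/2 * τ) := le_trans h6 h7
        _ ≤ B * (Real.exp (-(α/4 * R)) * Real.exp (α/4 * τ)) :=
            mul_le_mul_of_nonneg_left h8 hBpos.le
        _ = B * Real.exp (-(α/4 * R)) * Real.exp (α/4 * τ) := by ring
    calc (∫ τ in Iic (-R), ‖w τ‖)
        ≤ ∫ τ in Iic (-R), B * Real.exp (-(α/4 * R)) * Real.exp (α/4 * τ) :=
          setIntegral_mono_on (IntegrableOn.mono_set hwint.norm (Iic_subset_Iic.2 hR0))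
            (IntegrableOn.mono_set hφint (Iic_subset_Iic.2 hR0)) measurableSet_Iic hpoint
      _ ≤ ∫ τ in Iic (0:ℝ), B * Real.exp (-(α/4 * R)) * Real.exp (α/4 * τ) :=
          setIntegral_mono_set hφint
            (ae_of_all _ fun τ => mul_nonneg (mul_nonneg hBpos.le (Real.exp_pos _).le)
              (Real.exp_pos _).le)
            (HasSubset.Subset.eventuallyLE (Iic_subset_Iic.2 hR0))
      _ = B * Real.exp (-(α/4 * R)) * K4 := by rw [integral_const_mul, ← hK4]
  have hψint : IntegrableOn (fun τ => 2*δ*Real.exp (α*τ)) (Iic (0:ℝ)) :=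
    (OUaux.integrableOn_exp_mul hα).const_mul _
  have hcomp : (∫ τ in Ioc (-R) (0:ℝ), ‖w τ‖) ≤ 2*δ*K1 := by
    have hpoint : ∀ τ ∈ Ioc (-R) (0:ℝ), ‖w τ‖ ≤ 2*δ*Real.exp (α*τ) := by
      intro τ hτ
      have h1 : τ + t ∈ Icc (a - R) b := ⟨by linarith [ht.1, hτ.1.le], by linarith [ht.2, hτ.2]⟩
      have h2 := (hgsmall _ h1).le
      have h3 := (hgsmall t ⟨by linarith [ht.1], ht.2⟩).le
      rw [hw, Real.norm_eq_abs, abs_mul, abs_of_pos (Real.exp_pos _)]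
      have h4 : |g (τ+t) - g t| ≤ 2*δ := le_trans (abs_sub _ _) (by linarith)
      calc Real.exp (α*τ) * |g (τ+t) - g t| ≤ Real.exp (α*τ) * (2*δ) :=
            mul_le_mul_of_nonneg_left h4 (Real.exp_pos _).le
        _ = 2*δ*Real.exp (α*τ) := by ring
    calc (∫ τ in Ioc (-R) (0:ℝ), ‖w τ‖)
        ≤ ∫ τ in Ioc (-R) (0:ℝ), 2*δ*Real.exp (α*τ) :=
          setIntegral_mono_on (IntegrableOn.mono_set hwint.norm Ioc_subset_Iic_self)
            (IntegrableOn.mono_set hψint Ioc_subset_Iic_self) measurableSet_Ioc hpoint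
      _ ≤ ∫ τ in Iic (0:ℝ), 2*δ*Real.exp (α*τ) :=
          setIntegral_mono_set hψint
            (ae_of_all _ fun τ => mul_nonneg (by linarith : (0:ℝ) ≤ 2*δ) (Real.exp_pos _).le)
            (HasSubset.Subset.eventuallyLE Ioc_subset_Iic_self)
      _ = 2*δ*K1 := by rw [integral_const_mul, ← hK1]
  calc α * |∫ τ in Iic (0:ℝ), w τ|
      ≤ α * ((∫ τ in Iic (-R), ‖w τ‖) + ∫ τ in Ioc (-R) (0:ℝ), ‖w τ‖) := by
        rw [← hsplit]; exact mul_le_mul_of_nonneg_left habs hα.le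
    _ ≤ α * (B * Real.exp (-(α/4 * R)) * K4 + 2*δ*K1) :=
        mul_le_mul_of_nonneg_left (add_le_add htail hcomp) hα.le
    _ = α * (B * Real.exp (-(α/4 * R)) * K4) + α * (2*δ*K1) := by ring
    _ < ε/2 + ε/2 := add_lt_add hR2 hδ2
    _ = ε := by ring

lemma OUaux.cont {α : ℝ} (hα : 0 < α) {g : ℝ → ℝ} (hc : Continuous g) {C : ℝ} (hC : 0 ≤ C)
    (hg : ∀ s, |g s| ≤ |s| + C) :
    Continuous fun t => -α * ∫ τ in Iic (0:ℝ), Real.exp (α * τ) * (g (τ + t) - g t) := by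
  apply continuous_const.mul
  rw [continuous_iff_continuousAt]
  intro t₀
  apply continuousAt_of_dominated
    (bound := fun τ => (1 * (2/α) + (2 * (|t₀| + 1) + 2 * C)) * Real.exp (α/2 * τ))
  · exact Eventually.of_forall fun t =>
      ((Real.continuous_exp.comp (continuous_const.mul continuous_id)).mul
        ((hc.comp (continuous_id.add continuous_const)).sub
          continuous_const)).aestronglyMeasurable.restrict
  · have hball : ∀ᶠ t in 𝓝 t₀, |t| ≤ |t₀| + 1 := by
      have hb : ∀ᶠ t in 𝓝 t₀, dist t t₀ < 1 := by
        filter_upwards [Metric.ball_mem_nhds t₀ one_pos] with t ht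
        exact ht
      filter_upwards [hb] with t ht
      rw [Real.dist_eq] at ht
      calc |t| = |t - t₀ + t₀| := by rw [sub_add_cancel]
        _ ≤ |t - t₀| + |t₀| := abs_add_le _ _
        _ ≤ |t₀| + 1 := by linarith [abs_sub_comm t t₀]
    filter_upwards [hball] with t htb
    filter_upwards [ae_restrict_mem measurableSet_Iic] with τ hτ
    rw [Real.norm_eq_abs, abs_mul, abs_of_pos (Real.exp_pos _)]
    have h1 : |g (τ + t) - g t| ≤ 1 * |τ| + (2 * (|t₀| + 1) + 2 * C) := by
      calc |g (τ + t) - g t| ≤ |g (τ + t)| + |g t| := abs_sub _ _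
        _ ≤ (|τ + t| + C) + (|t| + C) := add_le_add (hg _) (hg _)
        _ ≤ 1 * |τ| + (2 * (|t₀| + 1) + 2 * C) := by linarith [abs_add_le τ t]
    calc Real.exp (α*τ) * |g (τ + t) - g t|
        ≤ Real.exp (α*τ) * (1 * |τ| + (2 * (|t₀| + 1) + 2 * C)) :=
          mul_le_mul_of_nonneg_left h1 (Real.exp_pos _).le
      _ ≤ (1 * (2/α) + (2 * (|t₀| + 1) + 2 * C)) * Real.exp (α/2 * τ) :=
          OUaux.key_bound hα hτ zero_le_one (by positivity)
  · exact (OUaux.integrableOn_exp_mul (half_pos hα)).const_mul _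
  · exact Eventually.of_forall fun τ =>
      (continuous_const.mul ((hc.comp (continuous_const.add continuous_id)).sub
        hc)).continuousAt


/-- If `ωₙ → ω` uniformly on compact sets with `ωₙ, ω ∈ Ω_m`, then
`y(θ_t ωₙ) → y(θ_t ω)` uniformly for `t` in any compact interval; in particular, if also
`tₙ → t`, then `y(θ_{tₙ} ωₙ) → y(θ_t ω)`. -/
theorem stmt12 (α : ℝ) (hα : 0 < α) (m : ℕ) (hm : 1 ≤ m)
    (ω : ℕ → ℝ → ℝ) (ω₀ : ℝ → ℝ)
    (hcont : ∀ n, Continuous (ω n)) (hcont₀ : Continuous ω₀)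
    (hzero : ∀ n, ω n 0 = 0) (hzero₀ : ω₀ 0 = 0)
    (hmem : ∀ n, memOmegaM α m (ω n)) (hmem₀ : memOmegaM α m ω₀)
    (hconv : ∀ K : Set ℝ, IsCompact K → TendstoUniformlyOn (fun n => ω n) ω₀ atTop K) :
    (∀ a b : ℝ, TendstoUniformlyOn (fun n t => yOU α (shiftOU t (ω n)))
        (fun t => yOU α (shiftOU t ω₀)) atTop (Set.Icc a b)) ∧
    (∀ (t : ℕ → ℝ) (t₀ : ℝ), Tendsto t atTop (𝓝 t₀) →
      Tendsto (fun n => yOU α (shiftOU (t n) (ω n))) atTop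
        (𝓝 (yOU α (shiftOU t₀ ω₀)))) := by
  have hmem' : ∀ n, ∀ t : ℝ, (m : ℝ) ≤ |t| → |ω n t| ≤ |t| := fun n t ht => (hmem n t ht).1
  have hmem₀' : ∀ t : ℝ, (m : ℝ) ≤ |t| → |ω₀ t| ≤ |t| := fun t ht => (hmem₀ t ht).1
  have hmain : ∀ a b : ℝ, TendstoUniformlyOn (fun n t => yOU α (shiftOU t (ω n)))
      (fun t => yOU α (shiftOU t ω₀)) atTop (Set.Icc a b) := by
    intro a b
    have := OUaux.main hα m hm ω ω₀ hcont hcont₀ hmem' hmem₀' hconv a b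
    simpa only [yOU, shiftOU] using this
  refine ⟨hmain, ?_⟩
  intro t t₀ ht
  obtain ⟨C₀, hC₀, hg₀⟩ := OUaux.linear_bound hcont₀ hmem₀'
  have hFc : Continuous fun s => yOU α (shiftOU s ω₀) := by
    have := OUaux.cont hα hcont₀ hC₀ hg₀
    simpa only [yOU, shiftOU] using this
  have h1 := hmain (t₀ - 1) (t₀ + 1)
  apply h1.tendsto_comp hFc.continuousAt.continuousWithinAt
  rw [tendsto_nhdsWithin_iff]
  refine ⟨ht, ht.eventually_mem (Icc_mem_nhds (by linarith) (by linarith))⟩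

end OUauxSection
end

section
/- Let α > 0 and m ∈ ℕ, m ≥ 1. Then Ω_m is a closed subset of Ω = {ω ∈ C(ℝ, ℝ) : ω(0) = 0} with respect to the topology of uniform convergence on compact sets; that is, if ω_n ∈ Ω_m for all n and ω_n → ω uniformly on every compact subset of ℝ with ω ∈ Ω, then ω ∈ Ω_m. -/
open Filter Topology MeasureTheory

/- ### Auxiliary lemmas -/

section Aux

lemma auxExpBound {c : ℝ} (hc : 0 < c) {x : ℝ} (hx : x ≤ 0) :
    |x| * Real.exp (c * x) ≤ 1 / c := by
  have h1 : c * (-x) ≤ Real.exp (c * (-x)) :=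
    le_trans (by linarith) (Real.add_one_le_exp _)
  have h2 : Real.exp (c * x) * Real.exp (c * (-x)) = 1 := by
    rw [← Real.exp_add]; ring_nf; exact Real.exp_zero
  have hp1 : (0:ℝ) < Real.exp (c * x) := Real.exp_pos _
  have hp2 : (0:ℝ) < Real.exp (c * (-x)) := Real.exp_pos _
  rw [abs_of_nonpos hx, le_div_iff₀ hc]
  nlinarith [mul_le_mul_of_nonneg_right h1 hp1.le]

lemma intervalIntegral_exp_mul {c : ℝ} (hc : c ≠ 0) (y z : ℝ) :
    ∫ x in y..z, Real.exp (c * x) = (Real.exp (c * z) - Real.exp (c * y)) / c := by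
  rw [intervalIntegral.integral_comp_mul_left Real.exp hc, integral_exp, smul_eq_mul]
  ring

lemma setIntegral_exp_mul_Iic_le {c : ℝ} (hc : 0 < c) :
    ∫ τ in Set.Iic (0:ℝ), Real.exp (c * τ) ≤ 1 / c := by
  refine le_of_tendsto
    (intervalIntegral_tendsto_integral_Iic (0:ℝ) (integrableOn_exp_mul_Iic hc 0) tendsto_id) ?_
  filter_upwards with y
  simp only [id_eq]
  rw [intervalIntegral_exp_mul hc.ne', mul_zero, Real.exp_zero]
  have := (Real.exp_pos (c * y)).le
  rw [div_le_div_iff₀ hc hc]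
  nlinarith

/-- The key pointwise bound on the integrand of `yOU (shiftOU r ω)`. -/
lemma integrand_bound {α C r τ : ℝ} (hα : 0 < α) (hC : 0 ≤ C) (hτ : τ ≤ 0)
    {ω : ℝ → ℝ} (hgrow : ∀ s, |ω s| ≤ |s| + C) :
    |Real.exp (α * τ) * shiftOU r ω τ| ≤ (2/α + 2*|r| + 2*C) * Real.exp (α/2 * τ) := by
  have h1 : |shiftOU r ω τ| ≤ |τ| + 2*|r| + 2*C := by
    have ha := hgrow (τ + r)
    have hb := hgrow r
    have habs : |τ + r| ≤ |τ| + |r| := abs_add_le τ r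
    calc |shiftOU r ω τ| = |ω (τ + r) - ω r| := rfl
      _ ≤ |ω (τ + r)| + |ω r| := abs_sub _ _
      _ ≤ (|τ + r| + C) + (|r| + C) := by linarith
      _ ≤ |τ| + 2*|r| + 2*C := by linarith
  have hsplit : Real.exp (α * τ) = Real.exp (α/2 * τ) * Real.exp (α/2 * τ) := by
    rw [← Real.exp_add]; ring_nf
  have h2 : |τ| * Real.exp (α/2 * τ) ≤ 2/α := by
    have := auxExpBound (half_pos hα) hτ
    rw [one_div, ← one_div] at this
    calc |τ| * Real.exp (α/2 * τ) ≤ 1 / (α/2) := this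
      _ = 2/α := by rw [div_div_eq_mul_div, one_mul]
  have h3 : Real.exp (α/2 * τ) ≤ 1 := by
    rw [Real.exp_le_one_iff]
    nlinarith
  have hp : (0:ℝ) < Real.exp (α/2 * τ) := Real.exp_pos _
  have hS : 0 ≤ |shiftOU r ω τ| := abs_nonneg _
  rw [abs_mul, abs_of_pos (Real.exp_pos (α * τ)), hsplit]
  have hA := mul_le_mul_of_nonneg_left h1 (mul_pos hp hp).le
  have hB : Real.exp (α/2 * τ) * (|τ| * Real.exp (α/2 * τ)) ≤ Real.exp (α/2 * τ) * (2/α) :=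
    mul_le_mul_of_nonneg_left h2 hp.le
  have hEE : Real.exp (α/2 * τ) * Real.exp (α/2 * τ) ≤ Real.exp (α/2 * τ) := by nlinarith
  have hD : Real.exp (α/2 * τ) * Real.exp (α/2 * τ) * (2*|r| + 2*C)
      ≤ Real.exp (α/2 * τ) * (2*|r| + 2*C) := by
    refine mul_le_mul_of_nonneg_right hEE (by positivity)
  nlinarith [hA, hB, hD]

lemma integrand_continuous {α : ℝ} (r : ℝ) {ω : ℝ → ℝ} (hcont : Continuous ω) :
    Continuous (fun τ => Real.exp (α * τ) * shiftOU r ω τ) := by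
  unfold shiftOU
  fun_prop

lemma integrableOn_integrand {α C : ℝ} (hα : 0 < α) (hC : 0 ≤ C) (r : ℝ) {ω : ℝ → ℝ}
    (hcont : Continuous ω) (hgrow : ∀ s, |ω s| ≤ |s| + C) :
    IntegrableOn (fun τ => Real.exp (α * τ) * shiftOU r ω τ) (Set.Iic (0:ℝ)) := by
  refine Integrable.mono'
    ((integrableOn_exp_mul_Iic (half_pos hα) 0).const_mul (2/α + 2*|r| + 2*C)) ?_ ?_
  · exact ((integrand_continuous r hcont).aestronglyMeasurable).restrict
  · filter_upwards [ae_restrict_mem measurableSet_Iic] with τ hτ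
    rw [Real.norm_eq_abs]
    exact integrand_bound (r := r) hα hC hτ hgrow

lemma abs_yOU_le {α C : ℝ} (hα : 0 < α) (hC : 0 ≤ C) (r : ℝ) {ω : ℝ → ℝ}
    (hcont : Continuous ω) (hgrow : ∀ s, |ω s| ≤ |s| + C) :
    |yOU α (shiftOU r ω)| ≤ 2 * (2/α + 2*|r| + 2*C) := by
  set K := 2/α + 2*|r| + 2*C with hK
  have hK0 : 0 ≤ K := by positivity
  have h1 : ‖∫ τ in Set.Iic (0:ℝ), Real.exp (α * τ) * shiftOU r ω τ‖
      ≤ ∫ τ in Set.Iic (0:ℝ), K * Real.exp (α/2 * τ) := by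
    refine norm_integral_le_of_norm_le
      ((integrableOn_exp_mul_Iic (half_pos hα) 0).const_mul K) ?_
    filter_upwards [ae_restrict_mem measurableSet_Iic] with τ hτ
    rw [Real.norm_eq_abs]
    exact integrand_bound (r := r) hα hC hτ hgrow
  have h2 : ∫ τ in Set.Iic (0:ℝ), K * Real.exp (α/2 * τ)
      = K * ∫ τ in Set.Iic (0:ℝ), Real.exp (α/2 * τ) := integral_const_mul K _
  have h3 : ∫ τ in Set.Iic (0:ℝ), Real.exp (α/2 * τ) ≤ 1 / (α/2) :=
    setIntegral_exp_mul_Iic_le (half_pos hα)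
  have h4 : (1:ℝ) / (α/2) = 2/α := by rw [div_div_eq_mul_div, one_mul]
  have h5 : K * ∫ τ in Set.Iic (0:ℝ), Real.exp (α/2 * τ) ≤ K * (2/α) := by
    rw [← h4]; exact mul_le_mul_of_nonneg_left h3 hK0
  rw [yOU, abs_mul, abs_neg, abs_of_pos hα]
  rw [Real.norm_eq_abs] at h1
  calc α * |∫ τ in Set.Iic (0:ℝ), Real.exp (α * τ) * shiftOU r ω τ|
      ≤ α * (K * (2/α)) := by
        refine mul_le_mul_of_nonneg_left ?_ hα.le
        rw [h2] at h1; linarith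
    _ = 2 * K := by field_simp
  
lemma continuous_yShift {α C : ℝ} (hα : 0 < α) (hC : 0 ≤ C) {ω : ℝ → ℝ}
    (hcont : Continuous ω) (hgrow : ∀ s, |ω s| ≤ |s| + C) :
    Continuous (fun r => yOU α (shiftOU r ω)) := by
  have key : Continuous (fun r => ∫ τ in Set.Iic (0:ℝ), Real.exp (α * τ) * shiftOU r ω τ) := by
    rw [continuous_iff_continuousAt]
    intro x₀
    refine continuousAt_of_dominated
      (bound := fun τ => (2/α + 2*(|x₀|+1) + 2*C) * Real.exp (α/2 * τ)) ?_ ?_ ?_ ?_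
    · filter_upwards with r
      exact ((integrand_continuous r hcont).aestronglyMeasurable).restrict
    · have hev : ∀ᶠ r in 𝓝 x₀, |r| ≤ |x₀| + 1 := by
        filter_upwards [Metric.ball_mem_nhds x₀ one_pos] with r hr
        rw [Metric.mem_ball, Real.dist_eq] at hr
        calc |r| = |x₀ + (r - x₀)| := by ring_nf
          _ ≤ |x₀| + |r - x₀| := abs_add_le _ _
          _ ≤ |x₀| + 1 := by linarith
      filter_upwards [hev] with r hr
      filter_upwards [ae_restrict_mem measurableSet_Iic] with τ hτ
      have := integrand_bound (r := r) hα hC hτ hgrow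
      rw [Real.norm_eq_abs]
      refine this.trans (mul_le_mul_of_nonneg_right ?_ (Real.exp_pos _).le)
      linarith
    · exact (integrableOn_exp_mul_Iic (half_pos hα) 0).const_mul _
    · filter_upwards with τ
      have : Continuous (fun r => Real.exp (α * τ) * shiftOU r ω τ) := by
        unfold shiftOU; fun_prop
      exact this.continuousAt
  have : (fun r => yOU α (shiftOU r ω))
      = fun r => -α * ∫ τ in Set.Iic (0:ℝ), Real.exp (α * τ) * shiftOU r ω τ := rfl
  rw [this]
  exact continuous_const.mul key

lemma tendsto_yOU {α C : ℝ} (hα : 0 < α) (hC : 0 ≤ C) {ω : ℕ → ℝ → ℝ} {ω₀ : ℝ → ℝ} (r : ℝ)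
    (hcont : ∀ n, Continuous (ω n))
    (hgrow : ∀ᶠ n in atTop, ∀ s, |ω n s| ≤ |s| + C)
    (hpt : ∀ s : ℝ, Tendsto (fun n => ω n s) atTop (𝓝 (ω₀ s))) :
    Tendsto (fun n => yOU α (shiftOU r (ω n))) atTop (𝓝 (yOU α (shiftOU r ω₀))) := by
  have key : Tendsto (fun n => ∫ τ in Set.Iic (0:ℝ), Real.exp (α * τ) * shiftOU r (ω n) τ)
      atTop (𝓝 (∫ τ in Set.Iic (0:ℝ), Real.exp (α * τ) * shiftOU r ω₀ τ)) := by
    refine tendsto_integral_filter_of_dominated_convergence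
      (bound := fun τ => (2/α + 2*|r| + 2*C) * Real.exp (α/2 * τ)) ?_ ?_ ?_ ?_
    · filter_upwards with n
      exact ((integrand_continuous r (hcont n)).aestronglyMeasurable).restrict
    · filter_upwards [hgrow] with n hn
      filter_upwards [ae_restrict_mem measurableSet_Iic] with τ hτ
      rw [Real.norm_eq_abs]
      exact integrand_bound (r := r) hα hC hτ hn
    · exact (integrableOn_exp_mul_Iic (half_pos hα) 0).const_mul _
    · filter_upwards with τ
      have h1 : Tendsto (fun n => shiftOU r (ω n) τ) atTop (𝓝 (shiftOU r ω₀ τ)) := by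
        unfold shiftOU
        exact (hpt (τ + r)).sub (hpt r)
      exact h1.const_mul _
  exact key.const_mul _

/-- A continuous function bounded by `|s|` outside `[-m, m]` has linear growth. -/
lemma exists_growth {ω : ℝ → ℝ} (hc : Continuous ω) {m : ℕ}
    (h : ∀ s : ℝ, (m:ℝ) ≤ |s| → |ω s| ≤ |s|) :
    ∃ C, 0 ≤ C ∧ ∀ s, |ω s| ≤ |s| + C := by
  obtain ⟨C₀, hC₀⟩ := (isCompact_Icc (a := -(m:ℝ)) (b := (m:ℝ))).exists_bound_of_continuousOn
    hc.continuousOn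
  refine ⟨max C₀ 0, le_max_right _ _, fun s => ?_⟩
  by_cases hs : (m:ℝ) ≤ |s|
  · have := h s hs
    have := le_max_right C₀ 0
    linarith
  · have hmem : s ∈ Set.Icc (-(m:ℝ)) (m:ℝ) := by
      rw [not_le] at hs
      obtain ⟨h1, h2⟩ := abs_lt.1 hs
      exact ⟨h1.le, h2.le⟩
    have := hC₀ s hmem
    rw [Real.norm_eq_abs] at this
    have h2 : |ω s| ≤ max C₀ 0 := this.trans (le_max_left _ _)
    have := abs_nonneg s
    linarith

end Aux

/-- `Ω_m` is sequentially closed in the topology of uniform convergence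
on compact sets: if `ωₙ ∈ Ω_m` for all `n` and `ωₙ → ω` uniformly on every compact subset
of `ℝ`, where `ω` is continuous with `ω(0) = 0`, then `ω ∈ Ω_m`. -/
theorem stmt13 (α : ℝ) (hα : 0 < α) (m : ℕ) (hm : 1 ≤ m)
    (ω : ℕ → ℝ → ℝ) (ω₀ : ℝ → ℝ)
    (hcont : ∀ n, Continuous (ω n)) (hcont₀ : Continuous ω₀)
    (hzero : ∀ n, ω n 0 = 0) (hzero₀ : ω₀ 0 = 0)
    (hmem : ∀ n, memOmegaM α m (ω n))
    (hconv : ∀ K : Set ℝ, IsCompact K → TendstoUniformlyOn (fun n => ω n) ω₀ atTop K) :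
    memOmegaM α m ω₀ := by
  -- pointwise convergence
  have hpt : ∀ s : ℝ, Tendsto (fun n => ω n s) atTop (𝓝 (ω₀ s)) := fun s =>
    (hconv {s} isCompact_singleton).tendsto_at (Set.mem_singleton s)
  -- the pointwise bound for the limit
  have hbd₀ : ∀ s : ℝ, (m:ℝ) ≤ |s| → |ω₀ s| ≤ |s| := by
    intro s hs
    refine le_of_tendsto ((hpt s).abs) ?_
    filter_upwards with n using (hmem n s hs).1
  -- growth constant for the limit
  obtain ⟨C₀, hC₀0, hC₀⟩ := exists_growth hcont₀ hbd₀
  -- eventual uniform growth constant for the sequence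
  set C : ℝ := C₀ + 1 with hCdef
  have hC0 : 0 ≤ C := by linarith
  have hgrow₀ : ∀ s, |ω₀ s| ≤ |s| + C := fun s => (hC₀ s).trans (by linarith)
  have hev : ∀ᶠ n in atTop, ∀ s, |ω n s| ≤ |s| + C := by
    have h1 := hconv (Set.Icc (-(m:ℝ)) (m:ℝ)) isCompact_Icc
    rw [Metric.tendstoUniformlyOn_iff] at h1
    filter_upwards [h1 1 one_pos] with n hn s
    by_cases hs : (m:ℝ) ≤ |s|
    · have := (hmem n s hs).1
      linarith
    · have hmem' : s ∈ Set.Icc (-(m:ℝ)) (m:ℝ) := by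
        rw [not_le] at hs
        obtain ⟨h1', h2'⟩ := abs_lt.1 hs
        exact ⟨h1'.le, h2'.le⟩
      have hd := hn s hmem'
      rw [Real.dist_eq] at hd
      have : |ω n s| ≤ |ω₀ s| + 1 := by
        have := abs_sub_abs_le_abs_sub (ω n s) (ω₀ s)
        rw [abs_sub_comm] at hd
        linarith
      have := hC₀ s
      linarith
  -- per-n growth constants
  have hgrown : ∀ n, ∃ Cn, 0 ≤ Cn ∧ ∀ s, |ω n s| ≤ |s| + Cn := fun n =>
    exists_growth (hcont n) (fun s hs => (hmem n s hs).1)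
  intro t ht
  constructor
  · exact hbd₀ t ht
  · -- bound for r in the integration interval
    have hrange : ∀ r ∈ Set.uIoc (0:ℝ) t, |r| ≤ |t| := by
      intro r hr
      rw [Set.uIoc, Set.mem_Ioc] at hr
      rcases le_total 0 t with h | h
      · rw [abs_of_nonneg h]
        rw [min_eq_left h, max_eq_right h] at hr
        rw [abs_le]; constructor <;> linarith
      · rw [abs_of_nonpos h]
        rw [min_eq_right h, max_eq_left h] at hr
        rw [abs_le]; constructor <;> linarith
    set Y : ℝ := 2 * (2/α + 2*|t| + 2*C) with hYdef
    have hY0 : 0 ≤ Y := by positivity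
    -- convergence of the interval integrals
    have hconv2 : Tendsto (fun n => ∫ r in (0:ℝ)..t, (yOU α (shiftOU r (ω n))) ^ 2)
        atTop (𝓝 (∫ r in (0:ℝ)..t, (yOU α (shiftOU r ω₀)) ^ 2)) := by
      refine intervalIntegral.tendsto_integral_filter_of_dominated_convergence
        (bound := fun _ => Y ^ 2) ?_ ?_ ?_ ?_
      · filter_upwards with n
        obtain ⟨Cn, hCn0, hCn⟩ := hgrown n
        exact (((continuous_yShift hα hCn0 (hcont n) hCn).pow 2).aestronglyMeasurable).restrict
      · filter_upwards [hev] with n hn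
        filter_upwards with r hr
        have h1 := abs_yOU_le hα hC0 r (hcont n) hn
        have h2 : |yOU α (shiftOU r (ω n))| ≤ Y := by
          have := hrange r hr
          rw [hYdef]; linarith
        rw [Real.norm_eq_abs, abs_pow]
        exact pow_le_pow_left₀ (abs_nonneg _) h2 2
      · exact intervalIntegrable_const
      · filter_upwards with r _
        exact (tendsto_yOU hα hC0 r hcont hev hpt).pow 2
    refine le_of_tendsto (hconv2.abs) ?_
    filter_upwards with n using (hmem n t ht).2
end
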